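/- arXiv:2505.07706 — 6 statements merged into one kernel-verified Lean document; each statement's English description precedes it below -/
import Mathlib

section
/- If C ⊆ {0,1,2}^n is a code of size T such that every three distinct codewords triffer in at least m positions, then m·C(T,3) ≤ (n/27)·T^3. In particular, for fixed λ > 2/9 and m ≥ λn, the size T of any m-trifferent code of length n is bounded by a constant depending only on λ. -/
/-- Three ternary words `a`, `b`, `c` triffer at position `i` if their `i`-th
coordinates take all three values `0, 1, 2`. -/
def Triffers {n : ℕ} (a b c : Fin n → Fin 3) (i : Fin n) : Prop :=
  ({a i, b i, c i} : Finset (Fin 3)) = Finset.univ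

instance {n : ℕ} (a b c : Fin n → Fin 3) (i : Fin n) : Decidable (Triffers a b c i) := by
  unfold Triffers; infer_instance

/-- The number of positions where `a`, `b`, `c` triffer. -/
def trifferCount {n : ℕ} (a b c : Fin n → Fin 3) : ℕ :=
  (Finset.univ.filter fun i => Triffers a b c i).card

/-- A code is `m`-trifferent if every three distinct codewords triffer in at
least `m` positions. -/
def IsTrifferent {n : ℕ} (m : ℕ) (C : Finset (Fin n → Fin 3)) : Prop :=
  ∀ a ∈ C, ∀ b ∈ C, ∀ c ∈ C, a ≠ b → a ≠ c → b ≠ c → m ≤ trifferCount a b c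

/-- `T n m` is the maximum size of an `m`-trifferent code of length `n`. -/
noncomputable def T (n m : ℕ) : ℕ :=
  sSup {k | ∃ C : Finset (Fin n → Fin 3), IsTrifferent m C ∧ C.card = k}

/- ## Auxiliary lemmas -/

private def w3 (x y z : Fin 3) : ℕ := if ({x, y, z} : Finset (Fin 3)) = Finset.univ then 1 else 0

private theorem w3eval (f : Fin 3 → ℕ) :
    ∑ x : Fin 3, f x * ∑ y : Fin 3, f y * ∑ z : Fin 3, f z * w3 x y z
      = 6 * (f 0 * (f 1 * f 2)) := by
  simp only [Fin.sum_univ_three]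
  simp (config := { decide := true }) only [w3]
  simp only [if_true, if_false]
  ring

private theorem fiber3 {n : ℕ} (C : Finset (Fin n → Fin 3)) (i : Fin n) (h : Fin 3 → ℕ) :
    ∑ a ∈ C, h (a i) = ∑ v : Fin 3, (C.filter fun a => a i = v).card * h v := by
  rw [← Finset.sum_fiberwise' C (fun a => a i) h]
  exact Finset.sum_congr rfl fun v _ => by rw [Finset.sum_const, smul_eq_mul]

private theorem pos_count {n : ℕ} (C : Finset (Fin n → Fin 3)) (i : Fin n) :
    ∑ a ∈ C, ∑ b ∈ C, ∑ c ∈ C, (if Triffers a b c i then 1 else 0)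
      = 6 * ((C.filter fun a => a i = 0).card *
          ((C.filter fun a => a i = 1).card * (C.filter fun a => a i = 2).card)) := by
  have hw : ∀ a b c : Fin n → Fin 3,
      (if Triffers a b c i then 1 else 0) = w3 (a i) (b i) (c i) :=
    fun a b c => if_congr Iff.rfl rfl rfl
  calc ∑ a ∈ C, ∑ b ∈ C, ∑ c ∈ C, (if Triffers a b c i then 1 else 0)
      = ∑ a ∈ C, ∑ b ∈ C, ∑ c ∈ C, w3 (a i) (b i) (c i) :=
        Finset.sum_congr rfl fun a _ => Finset.sum_congr rfl fun b _ =>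
          Finset.sum_congr rfl fun c _ => hw a b c
    _ = ∑ x : Fin 3, (C.filter fun a => a i = x).card * ∑ b ∈ C, ∑ c ∈ C, w3 x (b i) (c i) := by
        exact fiber3 C i (fun x => ∑ b ∈ C, ∑ c ∈ C, w3 x (b i) (c i))
    _ = ∑ x : Fin 3, (C.filter fun a => a i = x).card *
          ∑ y : Fin 3, (C.filter fun a => a i = y).card * ∑ c ∈ C, w3 x y (c i) := by
        refine Finset.sum_congr rfl fun x _ => ?_
        rw [fiber3 C i (fun y => ∑ c ∈ C, w3 x y (c i))]
    _ = ∑ x : Fin 3, (C.filter fun a => a i = x).card *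
          ∑ y : Fin 3, (C.filter fun a => a i = y).card *
            ∑ z : Fin 3, (C.filter fun a => a i = z).card * w3 x y z := by
        refine Finset.sum_congr rfl fun x _ => ?_
        congr 1
        refine Finset.sum_congr rfl fun y _ => ?_
        rw [fiber3 C i (fun z => w3 x y z)]
    _ = _ := w3eval _

private theorem amgm3 (r s t : ℕ) : 27 * (r * s * t) ≤ (r + s + t) ^ 3 := by
  have h : 27 * ((r:ℤ) * s * t) ≤ ((r:ℤ) + s + t) ^ 3 := by
    have hr : (0:ℤ) ≤ r := Int.natCast_nonneg r
    have hs : (0:ℤ) ≤ s := Int.natCast_nonneg s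
    have ht : (0:ℤ) ≤ t := Int.natCast_nonneg t
    nlinarith [mul_nonneg hr (sq_nonneg ((s:ℤ) - t)), mul_nonneg hs (sq_nonneg ((r:ℤ) - t)),
      mul_nonneg ht (sq_nonneg ((r:ℤ) - s)), mul_nonneg (add_nonneg (add_nonneg hr hs) ht)
      (add_nonneg (add_nonneg (sq_nonneg ((r:ℤ)-s)) (sq_nonneg ((s:ℤ)-t))) (sq_nonneg ((r:ℤ)-t)))]
  exact_mod_cast h

private theorem fibersum {n : ℕ} (C : Finset (Fin n → Fin 3)) (i : Fin n) :
    (C.filter fun a => a i = 0).card + (C.filter fun a => a i = 1).card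
      + (C.filter fun a => a i = 2).card = C.card := by
  have h := fiber3 C i (fun _ => 1)
  simp only [Fin.sum_univ_three, mul_one] at h
  rw [← h]
  exact (Finset.card_eq_sum_ones C).symm

private theorem choose3mul (T : ℕ) : T.choose 3 * 6 = T * (T - 1) * (T - 2) := by
  have h := Nat.descFactorial_eq_factorial_mul_choose T 3
  have h2 : T.descFactorial 3 = T * (T-1) * (T-2) := by
    show (T-2)*((T-1)*(T*1)) = _; ring
  have h3 : Nat.factorial 3 = 6 := rfl
  rw [h2, h3] at h
  omega

private theorem lower_sum {n m : ℕ} (C : Finset (Fin n → Fin 3)) (hC : IsTrifferent m C) :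
    m * (C.card * ((C.card - 1) * (C.card - 2)))
      ≤ ∑ a ∈ C, ∑ b ∈ C, ∑ c ∈ C, trifferCount a b c := by
  have step : ∀ a ∈ C, ∀ b ∈ C,
      (if a ≠ b then (C.card - 2) * m else 0) ≤ ∑ c ∈ C, trifferCount a b c := by
    intro a ha b hb
    by_cases hab : a ≠ b
    · rw [if_pos hab]
      calc (C.card - 2) * m = ((C.erase a).erase b).card * m := by
            rw [Finset.card_erase_of_mem (Finset.mem_erase.2 ⟨hab.symm, hb⟩),
              Finset.card_erase_of_mem ha, Nat.sub_sub]
        _ = ∑ c ∈ (C.erase a).erase b, m := by rw [Finset.sum_const, smul_eq_mul]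
        _ ≤ ∑ c ∈ (C.erase a).erase b, trifferCount a b c := by
            refine Finset.sum_le_sum fun c hc => ?_
            obtain ⟨hcb, hca, hcC⟩ := by
              simpa [Finset.mem_erase] using hc
            exact hC a ha b hb c hcC hab (Ne.symm hca) (Ne.symm hcb)
        _ ≤ ∑ c ∈ C, trifferCount a b c := by
            refine Finset.sum_le_sum_of_subset ?_
            exact (Finset.erase_subset _ _).trans (Finset.erase_subset _ _)
    · rw [if_neg hab]; exact Nat.zero_le _
  have step2 : ∀ a ∈ C, (C.card - 1) * ((C.card - 2) * m)
      ≤ ∑ b ∈ C, ∑ c ∈ C, trifferCount a b c := by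
    intro a ha
    calc (C.card - 1) * ((C.card - 2) * m)
        = ∑ b ∈ C.erase a, (C.card - 2) * m := by
          rw [Finset.sum_const, smul_eq_mul, Finset.card_erase_of_mem ha]
      _ = ∑ b ∈ C.erase a, (if a ≠ b then (C.card - 2) * m else 0) := by
          refine Finset.sum_congr rfl fun b hb => ?_
          rw [if_pos (Ne.symm (Finset.mem_erase.1 hb).1)]
      _ ≤ ∑ b ∈ C, (if a ≠ b then (C.card - 2) * m else 0) := by
          refine Finset.sum_le_sum_of_subset_of_nonneg (Finset.erase_subset _ _)
            fun _ _ _ => Nat.zero_le _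
      _ ≤ ∑ b ∈ C, ∑ c ∈ C, trifferCount a b c := Finset.sum_le_sum (step a ha)
  calc m * (C.card * ((C.card - 1) * (C.card - 2)))
      = ∑ a ∈ C, (C.card - 1) * ((C.card - 2) * m) := by
        rw [Finset.sum_const, smul_eq_mul]
        simp [mul_comm, mul_assoc, mul_left_comm]
    _ ≤ _ := Finset.sum_le_sum step2

private theorem part1 (n m : ℕ) (C : Finset (Fin n → Fin 3)) (hC : IsTrifferent m C) :
    27 * m * (C.card.choose 3) ≤ n * C.card ^ 3 := by
  set Tc := C.card with hTc
  have hcount : ∀ a b c : Fin n → Fin 3,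
      trifferCount a b c = ∑ i : Fin n, (if Triffers a b c i then 1 else 0) := by
    intro a b c
    rw [trifferCount, Finset.card_filter]
  have hswap : ∑ a ∈ C, ∑ b ∈ C, ∑ c ∈ C, trifferCount a b c
      = ∑ i : Fin n, ∑ a ∈ C, ∑ b ∈ C, ∑ c ∈ C, (if Triffers a b c i then 1 else 0) := by
    simp only [hcount]
    calc ∑ a ∈ C, ∑ b ∈ C, ∑ c ∈ C, ∑ i : Fin n, (if Triffers a b c i then 1 else 0)
        = ∑ a ∈ C, ∑ b ∈ C, ∑ i : Fin n, ∑ c ∈ C, (if Triffers a b c i then 1 else 0) :=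
          Finset.sum_congr rfl fun a _ => Finset.sum_congr rfl fun b _ => Finset.sum_comm
      _ = ∑ a ∈ C, ∑ i : Fin n, ∑ b ∈ C, ∑ c ∈ C, (if Triffers a b c i then 1 else 0) :=
          Finset.sum_congr rfl fun a _ => Finset.sum_comm
      _ = _ := Finset.sum_comm
  have hup : ∀ i : Fin n,
      27 * (∑ a ∈ C, ∑ b ∈ C, ∑ c ∈ C, (if Triffers a b c i then 1 else 0)) ≤ 6 * Tc ^ 3 := by
    intro i
    rw [pos_count C i]
    have h1 := amgm3 (C.filter fun a => a i = 0).card (C.filter fun a => a i = 1).card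
      (C.filter fun a => a i = 2).card
    rw [fibersum C i] at h1
    calc 27 * (6 * ((C.filter fun a => a i = 0).card *
          ((C.filter fun a => a i = 1).card * (C.filter fun a => a i = 2).card)))
        = 6 * (27 * ((C.filter fun a => a i = 0).card * (C.filter fun a => a i = 1).card *
            (C.filter fun a => a i = 2).card)) := by ring
      _ ≤ 6 * Tc ^ 3 := Nat.mul_le_mul_left 6 h1
  have htot : 27 * (m * (Tc * ((Tc - 1) * (Tc - 2)))) ≤ n * (6 * Tc ^ 3) := by
    calc 27 * (m * (Tc * ((Tc - 1) * (Tc - 2))))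
        ≤ 27 * ∑ a ∈ C, ∑ b ∈ C, ∑ c ∈ C, trifferCount a b c :=
          Nat.mul_le_mul_left 27 (lower_sum C hC)
      _ = ∑ i : Fin n, 27 * (∑ a ∈ C, ∑ b ∈ C, ∑ c ∈ C, (if Triffers a b c i then 1 else 0)) := by
          rw [hswap, Finset.mul_sum]
      _ ≤ ∑ _i : Fin n, 6 * Tc ^ 3 := Finset.sum_le_sum fun i _ => hup i
      _ = n * (6 * Tc ^ 3) := by rw [Finset.sum_const, smul_eq_mul, Finset.card_univ,
          Fintype.card_fin]
  have key : 27 * m * Tc.choose 3 * 6 ≤ n * Tc ^ 3 * 6 := by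
    calc 27 * m * Tc.choose 3 * 6 = 27 * (m * (Tc.choose 3 * 6)) := by ring
      _ = 27 * (m * (Tc * ((Tc - 1) * (Tc - 2)))) := by
          rw [choose3mul]
          simp [mul_comm, mul_assoc, mul_left_comm]
      _ ≤ n * (6 * Tc ^ 3) := htot
      _ = n * Tc ^ 3 * 6 := by ring
  exact Nat.le_of_mul_le_mul_right key (by norm_num)

theorem stmt5 :
    (∀ (n m : ℕ) (C : Finset (Fin n → Fin 3)), IsTrifferent m C →
        27 * m * (C.card.choose 3) ≤ n * C.card ^ 3) ∧
    (∀ lam : ℝ, 2 / 9 < lam → ∃ c : ℕ, ∀ (n m : ℕ) (C : Finset (Fin n → Fin 3)),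
        lam * n ≤ (m : ℝ) → IsTrifferent m C → C.card ≤ c) := by
  constructor
  · exact part1
  · intro lam hlam
    refine ⟨⌈27 * lam / (9 * lam - 2)⌉₊ + 2, fun n m C hm hC => ?_⟩
    by_contra hbig
    push_neg at hbig
    set Tc := C.card with hTc
    have hlam0 : (0:ℝ) < lam := lt_trans (by norm_num) hlam
    have hden : (0:ℝ) < 9 * lam - 2 := by linarith
    have hcard : Tc ≤ 3 ^ n := by
      have h := Finset.card_le_univ C
      calc Tc ≤ Fintype.card (Fin n → Fin 3) := h
        _ = 3 ^ n := by simp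
    -- n is positive: if n = 0 the code has at most one element
    have hn : 0 < n := by
      rcases Nat.eq_zero_or_pos n with h0 | h
      · exfalso
        rw [h0] at hcard
        norm_num at hcard
        omega
      · exact h
    have hT3 : 3 ≤ Tc := by omega
    have h1 := part1 n m C hC
    have h1R : 27 * (m:ℝ) * (Tc.choose 3 : ℝ) ≤ (n:ℝ) * (Tc:ℝ) ^ 3 := by exact_mod_cast h1
    have hchoose : ((Tc.choose 3 : ℝ)) * 6 = (Tc:ℝ) * ((Tc:ℝ) - 1) * ((Tc:ℝ) - 2) := by
      calc ((Tc.choose 3 : ℝ)) * 6 = ((Tc.choose 3 * 6 : ℕ) : ℝ) := by push_cast; ring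
        _ = ((Tc * (Tc - 1) * (Tc - 2) : ℕ) : ℝ) := by rw [choose3mul]
        _ = (Tc:ℝ) * ((Tc:ℝ) - 1) * ((Tc:ℝ) - 2) := by
            rw [Nat.cast_mul, Nat.cast_mul, Nat.cast_sub (by omega : 1 ≤ Tc),
              Nat.cast_sub (by omega : 2 ≤ Tc)]
            norm_num
    have h2R : 27 * (lam * n) * (Tc.choose 3 : ℝ) ≤ (n:ℝ) * (Tc:ℝ) ^ 3 := by
      have hcn : (0:ℝ) ≤ (Tc.choose 3 : ℝ) := Nat.cast_nonneg _
      nlinarith [mul_le_mul_of_nonneg_right hm hcn]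
    have hnR : (0:ℝ) < (n:ℝ) := by exact_mod_cast hn
    have h3R : 27 * lam * (Tc.choose 3 : ℝ) ≤ (Tc:ℝ) ^ 3 := by
      rw [show 27 * (lam * (n:ℝ)) * (Tc.choose 3 : ℝ)
            = (27 * lam * (Tc.choose 3 : ℝ)) * n from by ring,
          show (n:ℝ) * (Tc:ℝ) ^ 3 = (Tc:ℝ) ^ 3 * n from by ring] at h2R
      exact le_of_mul_le_mul_right h2R hnR
    have h4R : 27 * lam * ((Tc:ℝ) * ((Tc:ℝ) - 1) * ((Tc:ℝ) - 2)) ≤ 6 * (Tc:ℝ) ^ 3 := by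
      rw [← hchoose]
      nlinarith [h3R]
    have hTpos : (0:ℝ) < (Tc:ℝ) := by exact_mod_cast (by omega : 0 < Tc)
    have h5R : 9 * lam * (((Tc:ℝ) - 1) * ((Tc:ℝ) - 2)) ≤ 2 * (Tc:ℝ) ^ 2 := by
      rw [show 27 * lam * ((Tc:ℝ) * ((Tc:ℝ) - 1) * ((Tc:ℝ) - 2))
            = (9 * lam * (((Tc:ℝ) - 1) * ((Tc:ℝ) - 2))) * (3 * (Tc:ℝ)) from by ring,
          show 6 * (Tc:ℝ) ^ 3 = (2 * (Tc:ℝ) ^ 2) * (3 * (Tc:ℝ)) from by ring] at h4R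
      exact le_of_mul_le_mul_right h4R (by linarith)
    have hceil : 27 * lam / (9 * lam - 2) ≤ (⌈27 * lam / (9 * lam - 2)⌉₊ : ℝ) := Nat.le_ceil _
    have hTbig : ((⌈27 * lam / (9 * lam - 2)⌉₊ : ℝ) + 3) ≤ (Tc:ℝ) := by
      have h : ⌈27 * lam / (9 * lam - 2)⌉₊ + 3 ≤ Tc := by omega
      exact_mod_cast h
    have hTgt : 27 * lam / (9 * lam - 2) < (Tc:ℝ) := by linarith
    have hTgt2 : 27 * lam < (9 * lam - 2) * (Tc:ℝ) := by
      rw [div_lt_iff₀ hden] at hTgt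
      linarith
    nlinarith [mul_lt_mul_of_pos_right hTgt2 hTpos, h5R, hlam0]
end

section
/- For all n ≥ 2, T(n, 2) ≤ (10/n)·(3/2)^n, where T(n,2) is the maximum size of a 2-trifferent ternary code of length n. -/
open Finset

namespace Trif

private lemma m1 : ∀ p q r s : Fin 3, ({p, q, r} : Finset (Fin 3)) = Finset.univ →
    (s = p ∨ s = q ∨ s = r) ∧ p ≠ q ∧ p ≠ r ∧ q ≠ r := by decide

private lemma m2 : ∀ a b c d : Fin 3, a ≠ b → c ≠ a → c ≠ b → d ≠ a → d ≠ b → c = d := by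
  decide

variable {n : ℕ}

/-- The set of coordinates where `x` agrees with `w`. -/
def agr (x w : Fin n → Fin 3) : Finset (Fin n) := Finset.univ.filter fun i => x i = w i

lemma mem_agr {x w : Fin n → Fin 3} {i : Fin n} : i ∈ agr x w ↔ x i = w i := by
  simp [agr]

lemma tri_val {a b c : Fin n → Fin 3} {i : Fin n} (h : Triffers a b c i) (s : Fin 3) :
    (s = a i ∨ s = b i ∨ s = c i) ∧ a i ≠ b i ∧ a i ≠ c i ∧ b i ≠ c i :=
  m1 (a i) (b i) (c i) s h

lemma pair_mem {T : Finset (Fin n)} {a b : Fin n} (hab : a ≠ b) (h2 : 2 ≤ T.card)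
    (hsub : T ⊆ {a, b}) : a ∈ T ∧ b ∈ T := by
  have hcard : ({a, b} : Finset (Fin n)).card = 2 := by
    rw [Finset.card_insert_of_notMem (by simp [hab]), Finset.card_singleton]
  have hT : T = {a, b} := Finset.eq_of_subset_of_card_le hsub (by rw [hcard]; exact h2)
  constructor <;> · rw [hT]; simp

variable {C : Finset (Fin n → Fin 3)} {v : Fin n → Fin 3}

/-- Forcing lemma: if `A` agrees with `v` exactly at `a`, `B` exactly at `b`,
and `P` never "usefully" agrees, then the triple `(P, A, B)` must triffer at
both `a` and `b`, forcing the value of `B` at `a`. -/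
lemma H0 (hC : IsTrifferent 2 C)
    {P A B : Fin n → Fin 3} (hP : P ∈ C) (hA : A ∈ C) (hB : B ∈ C)
    (hPA : P ≠ A) (hPB : P ≠ B) (hAB : A ≠ B) {a b : Fin n} (hab : a ≠ b)
    (hAa : A a = v a) (hA1 : ∀ i, i ≠ a → A i ≠ v i)
    (hBb : B b = v b) (hB1 : ∀ i, i ≠ b → B i ≠ v i)
    (hp : ∀ i, P i = v i → A i = B i) :
    B a ≠ v a ∧ B a ≠ P a ∧ P a ≠ v a := by
  have h2 := hC P hP A hA B hB hPA hPB hAB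
  unfold trifferCount at h2
  have hsub : (Finset.univ.filter fun i => Triffers P A B i) ⊆ {a, b} := by
    intro i hi
    have ht := (Finset.mem_filter.mp hi).2
    have hv := tri_val ht (v i)
    rcases hv.1 with h | h | h
    · exact absurd (hp i h.symm) hv.2.2.2
    · by_cases hia : i = a
      · simp [hia]
      · exact absurd h.symm (hA1 i hia)
    · by_cases hib : i = b
      · simp [hib]
      · exact absurd h.symm (hB1 i hib)
  obtain ⟨hamem, -⟩ := pair_mem hab h2 hsub
  have ht := (Finset.mem_filter.mp hamem).2
  have hv := tri_val ht (v a)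
  refine ⟨?_, ?_, ?_⟩
  · intro h
    exact hv.2.2.2 (hAa.trans h.symm)
  · exact fun h => hv.2.2.1 h.symm
  · intro h
    exact hv.2.1 (h.trans hAa.symm)

/-- If we have four codewords `p, u1, u2, u3` where the `uk` agree with `v`
at exactly one (pairwise distinct) coordinate each, and whenever `p` agrees
with `v` at a coordinate all the `uk` coincide there, we get a contradiction. -/
lemma endgame (hC : IsTrifferent 2 C)
    {p u1 u2 u3 : Fin n → Fin 3}
    (hpC : p ∈ C) (h1C : u1 ∈ C) (h2C : u2 ∈ C) (h3C : u3 ∈ C)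
    (hpu1 : p ≠ u1) (hpu2 : p ≠ u2) (hpu3 : p ≠ u3)
    (h12 : u1 ≠ u2) (h13 : u1 ≠ u3) (h23 : u2 ≠ u3)
    {j1 j2 j3 : Fin n} (hj12 : j1 ≠ j2) (hj13 : j1 ≠ j3) (hj23 : j2 ≠ j3)
    (hc1 : u1 j1 = v j1) (hc1' : ∀ i, i ≠ j1 → u1 i ≠ v i)
    (hc2 : u2 j2 = v j2) (hc2' : ∀ i, i ≠ j2 → u2 i ≠ v i)
    (hc3 : u3 j3 = v j3) (hc3' : ∀ i, i ≠ j3 → u3 i ≠ v i)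
    (hp' : ∀ i, p i = v i → u1 i = u2 i ∧ u1 i = u3 i ∧ u2 i = u3 i) : False := by
  have A21 := H0 hC hpC h1C h2C hpu1 hpu2 h12 hj12 hc1 hc1' hc2 hc2'
    (fun i h => (hp' i h).1)
  have A31 := H0 hC hpC h1C h3C hpu1 hpu3 h13 hj13 hc1 hc1' hc3 hc3'
    (fun i h => (hp' i h).2.1)
  have A12 := H0 hC hpC h2C h1C hpu2 hpu1 h12.symm hj12.symm hc2 hc2' hc1 hc1'
    (fun i h => ((hp' i h).1).symm)
  have A32 := H0 hC hpC h2C h3C hpu2 hpu3 h23 hj23 hc2 hc2' hc3 hc3'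
    (fun i h => (hp' i h).2.2)
  have A13 := H0 hC hpC h3C h1C hpu3 hpu1 h13.symm hj13.symm hc3 hc3' hc1 hc1'
    (fun i h => ((hp' i h).2.1).symm)
  have A23 := H0 hC hpC h3C h2C hpu3 hpu2 h23.symm hj23.symm hc3 hc3' hc2 hc2'
    (fun i h => ((hp' i h).2.2).symm)
  -- equalities of the other two words at each singleton coordinate
  have E1 : u2 j1 = u3 j1 :=
    m2 (v j1) (p j1) (u2 j1) (u3 j1) (Ne.symm A21.2.2) A21.1 A21.2.1 A31.1 A31.2.1
  have E2 : u1 j2 = u3 j2 :=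
    m2 (v j2) (p j2) (u1 j2) (u3 j2) (Ne.symm A12.2.2) A12.1 A12.2.1 A32.1 A32.2.1
  have E3 : u1 j3 = u2 j3 :=
    m2 (v j3) (p j3) (u1 j3) (u2 j3) (Ne.symm A13.2.2) A13.1 A13.2.1 A23.1 A23.2.1
  have h2 := hC u1 h1C u2 h2C u3 h3C h12 h13 h23
  unfold trifferCount at h2
  have hempty : (Finset.univ.filter fun i => Triffers u1 u2 u3 i) = ∅ := by
    rw [Finset.eq_empty_iff_forall_notMem]
    intro i hi
    have ht := (Finset.mem_filter.mp hi).2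
    have hv := tri_val ht (v i)
    rcases hv.1 with h | h | h
    · have hij : i = j1 := by
        by_contra hne; exact hc1' i hne h.symm
      subst hij
      exact hv.2.2.2 E1
    · have hij : i = j2 := by
        by_contra hne; exact hc2' i hne h.symm
      subst hij
      exact hv.2.2.1 E2
    · have hij : i = j3 := by
        by_contra hne; exact hc3' i hne h.symm
      subst hij
      exact hv.2.1 E3
  rw [hempty] at h2
  simp at h2

lemma capacity (hC : IsTrifferent 2 C) (v : Fin n → Fin 3) :
    (C.filter fun x => (agr x v).card ≤ 1).card ≤ 5 := by
  classical
  by_contra hcon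
  push_neg at hcon
  set S := C.filter (fun x => (agr x v).card ≤ 1) with hSdef
  have hS6 : 6 ≤ S.card := hcon
  have hSC : ∀ x ∈ S, x ∈ C := fun x hx => (Finset.mem_filter.mp hx).1
  have hS1 : ∀ x ∈ S, (agr x v).card ≤ 1 := fun x hx => (Finset.mem_filter.mp hx).2
  -- a third element distinct from any two given words
  have hthird : ∀ x y : Fin n → Fin 3, ∃ z ∈ S, z ≠ x ∧ z ≠ y := by
    intro x y
    have h1 : S.card ≤ (S \ {x, y}).card + ({x, y} : Finset _).card :=
      Finset.card_le_card_sdiff_add_card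
    have h2 : ({x, y} : Finset (Fin n → Fin 3)).card ≤ 2 :=
      le_trans (Finset.card_insert_le _ _) (by simp)
    have hpos : 0 < (S \ {x, y}).card := by omega
    obtain ⟨z, hz⟩ := Finset.card_pos.mp hpos
    rw [Finset.mem_sdiff] at hz
    refine ⟨z, hz.1, ?_, ?_⟩
    · intro h; exact hz.2 (by simp [h])
    · intro h; exact hz.2 (by simp [h])
  -- each member either has a singleton certificate or is a full avoider
  have hcert : ∀ x ∈ S, (∃ j, x j = v j ∧ ∀ i, i ≠ j → x i ≠ v i) ∨ (∀ i, x i ≠ v i) := by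
    intro x hx
    by_cases hex : ∃ j, x j = v j
    · obtain ⟨j, hj⟩ := hex
      refine Or.inl ⟨j, hj, fun i hij hiv => ?_⟩
      have hsub : ({i, j} : Finset (Fin n)) ⊆ agr x v := by
        intro t ht
        rcases Finset.mem_insert.mp ht with rfl | ht
        · exact mem_agr.mpr hiv
        · rw [Finset.mem_singleton] at ht; subst ht; exact mem_agr.mpr hj
      have hc2 : ({i, j} : Finset (Fin n)).card = 2 := by
        rw [Finset.card_insert_of_notMem (by simp [hij]), Finset.card_singleton]
      have := le_trans (Finset.card_le_card hsub) (hS1 x hx)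
      omega
    · push_neg at hex; exact Or.inr hex
  -- key subset fact: all triffer positions of a triple from S with two
  -- words not agreeing with v anywhere relevant must sit in agr z v
  -- (used below in two shapes)
  -- no two avoiders
  have havoid : ∀ x ∈ S, ∀ y ∈ S, x ≠ y → (∀ i, x i ≠ v i) → (∀ i, y i ≠ v i) → False := by
    intro x hx y hy hxy hax hay
    obtain ⟨z, hzS, hzx, hzy⟩ := hthird x y
    have h2 := hC x (hSC x hx) y (hSC y hy) z (hSC z hzS) hxy hzx.symm hzy.symm
    unfold trifferCount at h2
    have hsub : (Finset.univ.filter fun i => Triffers x y z i) ⊆ agr z v := by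
      intro i hi
      have ht := (Finset.mem_filter.mp hi).2
      have hv := tri_val ht (v i)
      rcases hv.1 with h | h | h
      · exact absurd h.symm (hax i)
      · exact absurd h.symm (hay i)
      · exact mem_agr.mpr h.symm
    have := le_trans h2 (le_trans (Finset.card_le_card hsub) (hS1 z hzS))
    omega
  -- distinct members have distinct singleton coordinates
  have hdist : ∀ x ∈ S, ∀ y ∈ S, x ≠ y → ∀ j,
      (x j = v j ∧ ∀ i, i ≠ j → x i ≠ v i) → (y j = v j ∧ ∀ i, i ≠ j → y i ≠ v i) → False := by
    intro x hx y hy hxy j hcx hcy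
    obtain ⟨z, hzS, hzx, hzy⟩ := hthird x y
    have h2 := hC x (hSC x hx) y (hSC y hy) z (hSC z hzS) hxy hzx.symm hzy.symm
    unfold trifferCount at h2
    have hsub : (Finset.univ.filter fun i => Triffers x y z i) ⊆ agr z v := by
      intro i hi
      have ht := (Finset.mem_filter.mp hi).2
      have hv := tri_val ht (v i)
      rcases hv.1 with h | h | h
      · have hij : i = j := by
          by_contra hne; exact hcx.2 i hne h.symm
        subst hij
        exact absurd (hcx.1.trans hcy.1.symm) hv.2.1
      · have hij : i = j := by
          by_contra hne; exact hcy.2 i hne h.symm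
        subst hij
        exact absurd (hcx.1.trans hcy.1.symm) hv.2.1
      · exact mem_agr.mpr h.symm
    have := le_trans h2 (le_trans (Finset.card_le_card hsub) (hS1 z hzS))
    omega

  -- the set of avoiders
  set Sav := S.filter (fun x => ∀ i, x i ≠ v i) with hSavdef
  have hSav1 : Sav.card ≤ 1 := by
    by_contra h
    push_neg at h
    obtain ⟨x, hx, y, hy, hxy⟩ := Finset.one_lt_card.mp (show 1 < Sav.card by omega)
    have hxS := Finset.mem_filter.mp hx
    have hyS := Finset.mem_filter.mp hy
    exact havoid x hxS.1 y hyS.1 hxy hxS.2 hyS.2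
  have extract3 : ∀ F : Finset (Fin n → Fin 3), 3 ≤ F.card →
      ∃ a ∈ F, ∃ b ∈ F, ∃ c ∈ F, a ≠ b ∧ a ≠ c ∧ b ≠ c := by
    intro F hF
    obtain ⟨a, ha⟩ := Finset.card_pos.mp (show 0 < F.card by omega)
    have h1 : (F.erase a).card = F.card - 1 := Finset.card_erase_of_mem ha
    obtain ⟨b, hb⟩ := Finset.card_pos.mp (show 0 < (F.erase a).card by omega)
    have h2 : ((F.erase a).erase b).card = (F.erase a).card - 1 := Finset.card_erase_of_mem hb
    obtain ⟨c, hc⟩ := Finset.card_pos.mp (show 0 < ((F.erase a).erase b).card by omega)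
    have hbe := Finset.mem_erase.mp hb
    have hce := Finset.mem_erase.mp hc
    have hce2 := Finset.mem_erase.mp hce.2
    exact ⟨a, ha, b, hbe.2, c, hce2.2, Ne.symm hbe.1, Ne.symm hce2.1, Ne.symm hce.1⟩
  by_cases hava : Sav.Nonempty
  · -- Case A : there is a full avoider p
    obtain ⟨p, hpSav⟩ := hava
    have hpS : p ∈ S := (Finset.mem_filter.mp hpSav).1
    have hpav : ∀ i, p i ≠ v i := (Finset.mem_filter.mp hpSav).2
    have hS'5 : 5 ≤ (S \ Sav).card := by
      have hsd : S.card ≤ (S \ Sav).card + Sav.card := Finset.card_le_card_sdiff_add_card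
      omega
    have hmemS' : ∀ x ∈ S \ Sav, x ∈ S ∧ x ∉ Sav := fun x hx => Finset.mem_sdiff.mp hx
    obtain ⟨u1, hu1, u2, hu2, u3, hu3, h12, h13, h23⟩ := extract3 (S \ Sav) (by omega)
    have hu1S := (hmemS' u1 hu1).1
    have hu2S := (hmemS' u2 hu2).1
    have hu3S := (hmemS' u3 hu3).1
    have hcertS' : ∀ x ∈ S \ Sav, ∃ j, x j = v j ∧ ∀ i, i ≠ j → x i ≠ v i := by
      intro x hx
      rcases hcert x (hmemS' x hx).1 with h | h
      · exact h
      · exact absurd (Finset.mem_filter.mpr ⟨(hmemS' x hx).1, h⟩) (hmemS' x hx).2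
    obtain ⟨j1, hc1⟩ := hcertS' u1 hu1
    obtain ⟨j2, hc2⟩ := hcertS' u2 hu2
    obtain ⟨j3, hc3⟩ := hcertS' u3 hu3
    have hj12 : j1 ≠ j2 := by
      intro h; subst h; exact hdist u1 hu1S u2 hu2S h12 j1 hc1 hc2
    have hj13 : j1 ≠ j3 := by
      intro h; subst h; exact hdist u1 hu1S u3 hu3S h13 j1 hc1 hc3
    have hj23 : j2 ≠ j3 := by
      intro h; subst h; exact hdist u2 hu2S u3 hu3S h23 j2 hc2 hc3
    have hpu : ∀ x ∈ S \ Sav, p ≠ x := by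
      intro x hx h
      exact (hmemS' x hx).2 (h ▸ hpSav)
    exact endgame hC (hSC p hpS) (hSC u1 hu1S) (hSC u2 hu2S) (hSC u3 hu3S)
      (hpu u1 hu1) (hpu u2 hu2) (hpu u3 hu3) h12 h13 h23 hj12 hj13 hj23
      hc1.1 hc1.2 hc2.1 hc2.2 hc3.1 hc3.2
      (fun i h => absurd h (hpav i))
  · -- Case B : no avoiders at all
    have hSavempty : Sav = ∅ := Finset.not_nonempty_iff_eq_empty.mp hava
    have hcertS : ∀ x ∈ S, ∃ j, x j = v j ∧ ∀ i, i ≠ j → x i ≠ v i := by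
      intro x hx
      rcases hcert x hx with h | h
      · exact h
      · have hmem : x ∈ Sav := Finset.mem_filter.mpr ⟨hx, h⟩
        rw [hSavempty] at hmem
        exact absurd hmem (Finset.notMem_empty x)
    obtain ⟨p, hpS⟩ := Finset.card_pos.mp (show 0 < S.card by omega)
    obtain ⟨j0, hcp⟩ := hcertS p hpS
    have hS55 : 5 ≤ (S.erase p).card := by
      rw [Finset.card_erase_of_mem hpS]; omega
    have hfib := Finset.card_eq_sum_card_fiberwise
      (f := fun x : Fin n → Fin 3 => x j0) (s := S.erase p) (t := Finset.univ)
      (fun x _ => Finset.mem_univ _)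
    have hfv : ((S.erase p).filter fun x => x j0 = v j0) = ∅ := by
      rw [Finset.eq_empty_iff_forall_notMem]
      intro x hx
      have h1 := Finset.mem_filter.mp hx
      have h2 := Finset.mem_erase.mp h1.1
      obtain ⟨jx, hcx⟩ := hcertS x h2.2
      have hj : j0 ≠ jx := by
        intro h; subst h; exact hdist p hpS x h2.2 (Ne.symm h2.1) j0 hcp hcx
      exact hcx.2 j0 hj h1.2
    have hbig : ∃ w : Fin 3, 3 ≤ ((S.erase p).filter fun x => x j0 = w).card := by
      by_contra hall
      push_neg at hall
      have hcarderase : ((Finset.univ : Finset (Fin 3)).erase (v j0)).card = 2 := by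
        rw [Finset.card_erase_of_mem (Finset.mem_univ _), Finset.card_univ, Fintype.card_fin]
      have hsumle : ∑ w ∈ (Finset.univ : Finset (Fin 3)).erase (v j0),
          ((S.erase p).filter fun x => x j0 = w).card ≤ 4 := by
        have hb : ∑ w ∈ (Finset.univ : Finset (Fin 3)).erase (v j0),
            ((S.erase p).filter fun x => x j0 = w).card ≤
            ((Finset.univ : Finset (Fin 3)).erase (v j0)).card • 2 := by
          apply Finset.sum_le_card_nsmul
          intro w _
          exact Nat.lt_succ_iff.mp (hall w)
        rw [hcarderase] at hb
        simpa using hb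
      have hsplit : ∑ w ∈ (Finset.univ : Finset (Fin 3)),
          ((S.erase p).filter fun x => x j0 = w).card
          = (∑ w ∈ (Finset.univ : Finset (Fin 3)).erase (v j0),
            ((S.erase p).filter fun x => x j0 = w).card)
            + ((S.erase p).filter fun x => x j0 = v j0).card :=
        (Finset.sum_erase_add _ _ (Finset.mem_univ (v j0))).symm
      have hz : ((S.erase p).filter fun x => x j0 = v j0).card = 0 := by
        rw [hfv]; rfl
      have hcontr : (S.erase p).card ≤ 4 := by
        rw [hfib, hsplit, hz, add_zero]
        exact hsumle
      exact absurd (le_trans hS55 hcontr) (by norm_num)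
    obtain ⟨w, hw⟩ := hbig
    obtain ⟨u1, hu1, u2, hu2, u3, hu3, h12, h13, h23⟩ := extract3 _ hw
    have hm : ∀ x, x ∈ ((S.erase p).filter fun y => y j0 = w) → x ∈ S ∧ x ≠ p ∧ x j0 = w := by
      intro x hx
      have h1 := Finset.mem_filter.mp hx
      have h2 := Finset.mem_erase.mp h1.1
      exact ⟨h2.2, h2.1, h1.2⟩
    obtain ⟨hu1S, hu1p, hu1w⟩ := hm u1 hu1
    obtain ⟨hu2S, hu2p, hu2w⟩ := hm u2 hu2
    obtain ⟨hu3S, hu3p, hu3w⟩ := hm u3 hu3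
    obtain ⟨j1, hc1⟩ := hcertS u1 hu1S
    obtain ⟨j2, hc2⟩ := hcertS u2 hu2S
    obtain ⟨j3, hc3⟩ := hcertS u3 hu3S
    have hj12 : j1 ≠ j2 := by
      intro h; subst h; exact hdist u1 hu1S u2 hu2S h12 j1 hc1 hc2
    have hj13 : j1 ≠ j3 := by
      intro h; subst h; exact hdist u1 hu1S u3 hu3S h13 j1 hc1 hc3
    have hj23 : j2 ≠ j3 := by
      intro h; subst h; exact hdist u2 hu2S u3 hu3S h23 j2 hc2 hc3
    refine endgame hC (hSC p hpS) (hSC u1 hu1S) (hSC u2 hu2S) (hSC u3 hu3S)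
      (Ne.symm hu1p) (Ne.symm hu2p) (Ne.symm hu3p) h12 h13 h23 hj12 hj13 hj23
      hc1.1 hc1.2 hc2.1 hc2.2 hc3.1 hc3.2 ?_
    intro i hpi
    have hij0 : i = j0 := by
      by_contra hne; exact hcp.2 i hne hpi
    subst hij0
    exact ⟨hu1w.trans hu2w.symm, hu1w.trans hu3w.symm, hu2w.trans hu3w.symm⟩

lemma card_ne (c : Fin 3) : Fintype.card {a : Fin 3 // a ≠ c} = 2 := by
  have h := Fintype.card_subtype_compl (fun a : Fin 3 => a = c)
  rw [Fintype.card_subtype_eq, Fintype.card_fin] at h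
  exact h

lemma per_x (x : Fin n → Fin 3) :
    n * 2 ^ (n - 1) ≤ ((Finset.univ : Finset (Fin n → Fin 3)).filter
      fun w => (agr x w).card ≤ 1).card := by
  classical
  set B : Fin n → Finset (Fin n → Fin 3) := fun j =>
    Finset.univ.filter fun w => ∀ i, if i = j then w i = x i else w i ≠ x i with hB
  have hcard : ∀ j, (B j).card = 2 ^ (n - 1) := by
    intro j
    have h1 : (B j).card
        = Fintype.card {w : Fin n → Fin 3 // ∀ i, if i = j then w i = x i else w i ≠ x i} :=
      (Fintype.card_subtype _).symm
    rw [h1, Fintype.card_congr (Equiv.subtypePiEquivPi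
      (p := fun i (a : Fin 3) => if i = j then a = x i else a ≠ x i)), Fintype.card_pi]
    have hfac : ∀ i : Fin n,
        Fintype.card {a : Fin 3 // if i = j then a = x i else a ≠ x i}
        = if i = j then 1 else 2 := by
      intro i
      by_cases hij : i = j
      · have e : {a : Fin 3 // if i = j then a = x i else a ≠ x i} ≃ {a : Fin 3 // a = x i} :=
          Equiv.subtypeEquivRight (fun a => by rw [if_pos hij])
        rw [Fintype.card_congr e, Fintype.card_subtype_eq, if_pos hij]
      · have e : {a : Fin 3 // if i = j then a = x i else a ≠ x i} ≃ {a : Fin 3 // a ≠ x i} :=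
          Equiv.subtypeEquivRight (fun a => by rw [if_neg hij])
        rw [Fintype.card_congr e, card_ne, if_neg hij]
    rw [Finset.prod_congr rfl (fun i _ => hfac i)]
    rw [← Finset.mul_prod_erase Finset.univ _ (Finset.mem_univ j), if_pos rfl, one_mul]
    rw [Finset.prod_congr rfl (fun i hi => if_neg (Finset.mem_erase.mp hi).1),
      Finset.prod_const, Finset.card_erase_of_mem (Finset.mem_univ j), Finset.card_univ,
      Fintype.card_fin]
  have hdisj : ∀ j ∈ (Finset.univ : Finset (Fin n)), ∀ k ∈ (Finset.univ : Finset (Fin n)),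
      j ≠ k → Disjoint (B j) (B k) := by
    intro j _ k _ hjk
    rw [Finset.disjoint_left]
    intro w hwj hwk
    have h1 := (Finset.mem_filter.mp hwj).2 k
    have h2 := (Finset.mem_filter.mp hwk).2 k
    rw [if_neg (Ne.symm hjk)] at h1
    rw [if_pos rfl] at h2
    exact h1 h2
  have hsub : (Finset.univ : Finset (Fin n)).biUnion B
      ⊆ Finset.univ.filter fun w => (agr x w).card ≤ 1 := by
    intro w hw
    obtain ⟨j, -, hwj⟩ := Finset.mem_biUnion.mp hw
    refine Finset.mem_filter.mpr ⟨Finset.mem_univ _, ?_⟩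
    have hsub2 : agr x w ⊆ {j} := by
      intro i hi
      have hx := mem_agr.mp hi
      rw [Finset.mem_singleton]
      by_contra hij
      have h := (Finset.mem_filter.mp hwj).2 i
      rw [if_neg hij] at h
      exact h hx.symm
    exact le_trans (Finset.card_le_card hsub2) (by simp)
  calc n * 2 ^ (n - 1) = ∑ _j : Fin n, 2 ^ (n - 1) := by
        rw [Finset.sum_const, Finset.card_univ, Fintype.card_fin, smul_eq_mul]
    _ = ∑ j : Fin n, (B j).card := Finset.sum_congr rfl (fun j _ => (hcard j).symm)
    _ = ((Finset.univ : Finset (Fin n)).biUnion B).card := (Finset.card_biUnion hdisj).symm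
    _ ≤ _ := Finset.card_le_card hsub

lemma main_count {C : Finset (Fin n → Fin 3)} (hC : IsTrifferent 2 C) :
    C.card * (n * 2 ^ (n - 1)) ≤ 5 * 3 ^ n := by
  classical
  have swap : ∑ x ∈ C, ((Finset.univ : Finset (Fin n → Fin 3)).filter
        fun w => (agr x w).card ≤ 1).card
      = ∑ w ∈ (Finset.univ : Finset (Fin n → Fin 3)),
        (C.filter fun x => (agr x w).card ≤ 1).card := by
    simp only [Finset.card_filter]
    exact Finset.sum_comm
  have h1 : C.card * (n * 2 ^ (n - 1)) ≤ ∑ x ∈ C,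
      ((Finset.univ : Finset (Fin n → Fin 3)).filter fun w => (agr x w).card ≤ 1).card := by
    calc C.card * (n * 2 ^ (n - 1)) = ∑ _x ∈ C, n * 2 ^ (n - 1) := by
          rw [Finset.sum_const, smul_eq_mul]
      _ ≤ _ := Finset.sum_le_sum (fun x _ => per_x x)
  have h2 : ∑ w ∈ (Finset.univ : Finset (Fin n → Fin 3)),
      (C.filter fun x => (agr x w).card ≤ 1).card ≤ 5 * 3 ^ n := by
    calc ∑ w ∈ (Finset.univ : Finset (Fin n → Fin 3)),
        (C.filter fun x => (agr x w).card ≤ 1).card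
        ≤ ∑ _w ∈ (Finset.univ : Finset (Fin n → Fin 3)), 5 :=
          Finset.sum_le_sum (fun w _ => capacity hC w)
      _ = 3 ^ n * 5 := by
          rw [Finset.sum_const, smul_eq_mul, Finset.card_univ, Fintype.card_fun,
            Fintype.card_fin, Fintype.card_fin]
      _ = 5 * 3 ^ n := by ring
  rw [swap] at h1
  exact le_trans h1 h2

end Trif

theorem stmt6 (n : ℕ) (hn : 2 ≤ n) : (T n 2 : ℝ) ≤ 10 / n * (3 / 2) ^ n := by
  classical
  have hset : {k | ∃ C : Finset (Fin n → Fin 3), IsTrifferent 2 C ∧ C.card = k}.Nonempty :=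
    ⟨0, ∅, fun a ha => absurd ha (Finset.notMem_empty a), Finset.card_empty⟩
  have hbdd : BddAbove {k | ∃ C : Finset (Fin n → Fin 3), IsTrifferent 2 C ∧ C.card = k} := by
    refine ⟨3 ^ n, ?_⟩
    rintro k ⟨C, -, rfl⟩
    calc C.card ≤ (Finset.univ : Finset (Fin n → Fin 3)).card :=
          Finset.card_le_card (Finset.subset_univ C)
      _ = 3 ^ n := by
          rw [Finset.card_univ, Fintype.card_fun, Fintype.card_fin, Fintype.card_fin]
  have hTdef : T n 2 = sSup {k | ∃ C : Finset (Fin n → Fin 3), IsTrifferent 2 C ∧ C.card = k} :=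
    rfl
  have hmem := Nat.sSup_mem hset hbdd
  rw [← hTdef] at hmem
  obtain ⟨C, hC, hcard⟩ := hmem
  have hmain : C.card * (n * 2 ^ (n - 1)) ≤ 5 * 3 ^ n := Trif.main_count hC
  have hNreal : (C.card : ℝ) * ((n : ℝ) * 2 ^ (n - 1)) ≤ 5 * 3 ^ n := by
    exact_mod_cast hmain
  have hpow : (2 : ℝ) ^ (n - 1) * 2 = 2 ^ n := by
    rw [← pow_succ]
    congr 1
    omega
  have h32 : ((3 : ℝ) / 2) ^ n = 3 ^ n / 2 ^ n := div_pow 3 2 n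
  have hnpos : (0 : ℝ) < n := by
    have : 0 < n := by omega
    exact_mod_cast this
  rw [← hcard, h32, div_mul_div_comm, le_div_iff₀ (by positivity)]
  calc (C.card : ℝ) * ((n : ℝ) * 2 ^ n) = (C.card : ℝ) * ((n : ℝ) * 2 ^ (n - 1)) * 2 := by
        rw [← hpow]; ring
    _ ≤ 5 * 3 ^ n * 2 := by linarith
    _ = 10 * 3 ^ n := by ring
end

section
/- Let S = {x ∈ {0,1,2}^n : x has exactly one coordinate equal to 2}. Then any 2-trifferent code C ⊆ S has |C| ≤ 5. -/
lemma fin3_distinct : ∀ x y z : Fin 3, ({x, y, z} : Finset (Fin 3)) = Finset.univ →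
    x ≠ y ∧ x ≠ z ∧ y ≠ z := by decide

lemma fin3_eq : ∀ a b c : Fin 3, a ≠ 2 → b ≠ 2 → c ≠ 2 → c ≠ a → c ≠ b → a = b := by decide

lemma fin3_mem01 : ∀ v : Fin 3, v ≠ 2 → v ∈ ({0, 1} : Finset (Fin 3)) := by decide

lemma uniq_pos {n : ℕ} {x : Fin n → Fin 3}
    (h : (Finset.univ.filter fun j => x j = 2).card = 1) {i : Fin n} (hi : x i = 2) :
    ∀ j, x j = 2 → j = i := by
  obtain ⟨k, hk⟩ := Finset.card_eq_one.mp h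
  intro j hj
  have hji : j ∈ Finset.univ.filter fun j => x j = 2 := by
    simp [Finset.mem_filter, hj]
  have hii : i ∈ Finset.univ.filter fun j => x j = 2 := by
    simp [Finset.mem_filter, hi]
  rw [hk, Finset.mem_singleton] at hji hii
  rw [hji, hii]

lemma exists_pos {n : ℕ} {x : Fin n → Fin 3}
    (h : (Finset.univ.filter fun j => x j = 2).card = 1) : ∃ i, x i = 2 := by
  obtain ⟨k, hk⟩ := Finset.card_eq_one.mp h
  have : k ∈ Finset.univ.filter fun j => x j = 2 := by rw [hk]; simp
  exact ⟨k, (Finset.mem_filter.mp this).2⟩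

/-- Key lemma: if `b` and `c` agree at `a`'s 2-position, then the triple must
triffer at `b`'s and `c`'s 2-positions, giving two disagreements. -/
lemma key {n : ℕ} {a b c : Fin n → Fin 3} {ia ib ic : Fin n}
    (ha2 : a ia = 2) (haU : ∀ j, a j = 2 → j = ia)
    (hb2 : b ib = 2) (hbU : ∀ j, b j = 2 → j = ib)
    (hc2 : c ic = 2) (hcU : ∀ j, c j = 2 → j = ic)
    (hbc : ib ≠ ic)
    (htc : 2 ≤ trifferCount a b c)
    (hbad : b ia = c ia) :
    a ib ≠ c ib ∧ a ic ≠ b ic := by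
  set F := Finset.univ.filter fun i => Triffers a b c i with hF
  have hsub : F ⊆ {ib, ic} := by
    intro i hi
    have htri : ({a i, b i, c i} : Finset (Fin 3)) = Finset.univ :=
      (Finset.mem_filter.mp hi).2
    have h2 : (2 : Fin 3) ∈ ({a i, b i, c i} : Finset (Fin 3)) := by
      rw [htri]; exact Finset.mem_univ _
    simp only [Finset.mem_insert, Finset.mem_singleton] at h2
    rcases h2 with h | h | h
    · exfalso
      have hia : i = ia := haU i h.symm
      subst hia
      exact (fin3_distinct _ _ _ htri).2.2 hbad
    · simp [Finset.mem_insert, hbU i h.symm]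
    · simp [Finset.mem_singleton, hcU i h.symm]
  have hcard2 : ({ib, ic} : Finset (Fin n)).card = 2 := by
    rw [Finset.card_insert_of_notMem (by simpa using hbc), Finset.card_singleton]
  have hFeq : F = {ib, ic} := by
    apply Finset.eq_of_subset_of_card_le hsub
    rw [hcard2]; exact htc
  have hmb : ib ∈ F := by rw [hFeq]; simp
  have hmc : ic ∈ F := by rw [hFeq]; simp
  have htb : ({a ib, b ib, c ib} : Finset (Fin 3)) = Finset.univ :=
    (Finset.mem_filter.mp hmb).2
  have htc' : ({a ic, b ic, c ic} : Finset (Fin 3)) = Finset.univ :=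
    (Finset.mem_filter.mp hmc).2
  exact ⟨(fin3_distinct _ _ _ htb).2.1, (fin3_distinct _ _ _ htc').1⟩

/-- Distinct codewords have distinct 2-positions (when the code has ≥ 3 words). -/
lemma pos_inj {n : ℕ} {C : Finset (Fin n → Fin 3)}
    (hS : ∀ x ∈ C, (Finset.univ.filter fun i => x i = 2).card = 1)
    (htr : IsTrifferent 2 C) (hcard : 3 ≤ C.card)
    {a b : Fin n → Fin 3} (ha : a ∈ C) (hb : b ∈ C) (hab : a ≠ b)
    {i : Fin n} (ha2 : a i = 2) (hb2 : b i = 2) : False := by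
  have hne : (C \ {a, b}).Nonempty := by
    rw [← Finset.card_pos]
    have h1 : C.card - ({a, b} : Finset (Fin n → Fin 3)).card ≤ (C \ {a, b}).card :=
      Finset.le_card_sdiff _ _
    have h2 : ({a, b} : Finset (Fin n → Fin 3)).card ≤ 2 :=
      (Finset.card_insert_le _ _).trans (by simp)
    omega
  obtain ⟨c, hc⟩ := hne
  rw [Finset.mem_sdiff] at hc
  obtain ⟨hcC, hcn⟩ := hc
  simp only [Finset.mem_insert, Finset.mem_singleton, not_or] at hcn
  obtain ⟨ic, hc2⟩ := exists_pos (hS c hcC)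
  have htc : 2 ≤ trifferCount a b c :=
    htr a ha b hb c hcC hab (fun h => hcn.1 h.symm) (fun h => hcn.2 h.symm)
  have hsub : (Finset.univ.filter fun j => Triffers a b c j) ⊆ {ic} := by
    intro j hj
    have htri : ({a j, b j, c j} : Finset (Fin 3)) = Finset.univ :=
      (Finset.mem_filter.mp hj).2
    have h2 : (2 : Fin 3) ∈ ({a j, b j, c j} : Finset (Fin 3)) := by
      rw [htri]; exact Finset.mem_univ _
    simp only [Finset.mem_insert, Finset.mem_singleton] at h2
    rcases h2 with h | h | h
    · exfalso
      have hji : j = i := uniq_pos (hS a ha) ha2 j h.symm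
      subst hji
      exact (fin3_distinct _ _ _ htri).1 (by rw [h.symm, hb2])
    · exfalso
      have hji : j = i := uniq_pos (hS b hb) hb2 j h.symm
      subst hji
      exact (fin3_distinct _ _ _ htri).1 (by rw [ha2, h.symm])
    · simp [uniq_pos (hS c hcC) hc2 j h.symm]
  have : trifferCount a b c ≤ 1 := by
    unfold trifferCount
    calc _ ≤ ({ic} : Finset (Fin n)).card := Finset.card_le_card hsub
    _ = 1 := Finset.card_singleton _
  omega

theorem stmt7 (n : ℕ) (C : Finset (Fin n → Fin 3))
    (hS : ∀ x ∈ C, (Finset.univ.filter fun i => x i = 2).card = 1)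
    (htr : IsTrifferent 2 C) : C.card ≤ 5 := by
  by_contra hlt
  push_neg at hlt
  have hcard : 6 ≤ C.card := hlt
  have hcard3 : 3 ≤ C.card := by omega
  obtain ⟨x0, hx0⟩ : C.Nonempty := Finset.card_pos.mp (by omega)
  obtain ⟨i0, hx02⟩ := exists_pos (hS x0 hx0)
  have hx0U := uniq_pos (hS x0 hx0) hx02
  -- every other codeword avoids 2 at position i0
  have havoid : ∀ y ∈ C, y ≠ x0 → y i0 ≠ 2 := by
    intro y hy hne h
    exact pos_inj hS htr hcard3 hy hx0 hne h hx02
  -- pigeonhole on C.erase x0, mapping y ↦ y i0 ∈ {0,1}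
  have hmaps : ∀ y ∈ C.erase x0, y i0 ∈ ({0, 1} : Finset (Fin 3)) := by
    intro y hy
    exact fin3_mem01 _ (havoid y (Finset.mem_of_mem_erase hy) (Finset.ne_of_mem_erase hy))
  have hcard5 : ({0, 1} : Finset (Fin 3)).card * 2 < (C.erase x0).card := by
    rw [Finset.card_erase_of_mem hx0]
    have : ({0, 1} : Finset (Fin 3)).card = 2 := by decide
    omega
  obtain ⟨v, _, hv⟩ :=
    Finset.exists_lt_card_fiber_of_mul_lt_card_of_maps_to hmaps hcard5
  obtain ⟨y, z, w, hy, hz, hw, hyz, hyw, hzw⟩ :=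
    Finset.two_lt_card_iff.mp hv
  simp only [Finset.mem_filter, Finset.mem_erase] at hy hz hw
  obtain ⟨⟨hyx0, hyC⟩, hyv⟩ := hy
  obtain ⟨⟨hzx0, hzC⟩, hzv⟩ := hz
  obtain ⟨⟨hwx0, hwC⟩, hwv⟩ := hw
  -- positions of y, z, w
  obtain ⟨iy, hy2⟩ := exists_pos (hS y hyC)
  obtain ⟨iz, hz2⟩ := exists_pos (hS z hzC)
  obtain ⟨iw, hw2⟩ := exists_pos (hS w hwC)
  have hyU := uniq_pos (hS y hyC) hy2
  have hzU := uniq_pos (hS z hzC) hz2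
  have hwU := uniq_pos (hS w hwC) hw2
  -- positions are pairwise distinct
  have hi0y : i0 ≠ iy := fun h => pos_inj hS htr hcard3 hx0 hyC (Ne.symm hyx0) hx02 (h ▸ hy2)
  have hi0z : i0 ≠ iz := fun h => pos_inj hS htr hcard3 hx0 hzC (Ne.symm hzx0) hx02 (h ▸ hz2)
  have hi0w : i0 ≠ iw := fun h => pos_inj hS htr hcard3 hx0 hwC (Ne.symm hwx0) hx02 (h ▸ hw2)
  have hiyz : iy ≠ iz := fun h => pos_inj hS htr hcard3 hyC hzC hyz hy2 (h ▸ hz2)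
  have hiyw : iy ≠ iw := fun h => pos_inj hS htr hcard3 hyC hwC hyw hy2 (h ▸ hw2)
  have hizw : iz ≠ iw := fun h => pos_inj hS htr hcard3 hzC hwC hzw hz2 (h ▸ hw2)
  -- triffer counts
  have t_yz : 2 ≤ trifferCount x0 y z := htr x0 hx0 y hyC z hzC (Ne.symm hyx0) (Ne.symm hzx0) hyz
  have t_yw : 2 ≤ trifferCount x0 y w := htr x0 hx0 y hyC w hwC (Ne.symm hyx0) (Ne.symm hwx0) hyw
  have t_zw : 2 ≤ trifferCount x0 z w := htr x0 hx0 z hzC w hwC (Ne.symm hzx0) (Ne.symm hwx0) hzw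
  have t_yzw : 2 ≤ trifferCount y z w := htr y hyC z hzC w hwC hyz hyw hzw
  -- bad at x0 for each pair
  have k_yz := key hx02 hx0U hy2 hyU hz2 hzU hiyz t_yz (by rw [hyv, hzv])
  have k_yw := key hx02 hx0U hy2 hyU hw2 hwU hiyw t_yw (by rw [hyv, hwv])
  have k_zw := key hx02 hx0U hz2 hzU hw2 hwU hizw t_zw (by rw [hzv, hwv])
  -- values of codewords off their own 2-position are not 2
  have hzpy : z iy ≠ 2 := fun h => hiyz (hzU iy h)
  have hwpy : w iy ≠ 2 := fun h => hiyw (hwU iy h)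
  have hx0py : x0 iy ≠ 2 := fun h => hi0y (hx0U iy h).symm
  have hypz : y iz ≠ 2 := fun h => hiyz (hyU iz h).symm
  have hwpz : w iz ≠ 2 := fun h => hizw (hwU iz h)
  have hx0pz : x0 iz ≠ 2 := fun h => hi0z (hx0U iz h).symm
  -- z iy = w iy since both differ from x0 iy in a two-element set
  have hbadY : z iy = w iy :=
    fin3_eq _ _ _ hzpy hwpy hx0py (fun h => k_yz.1 h) (fun h => k_yw.1 h)
  -- hence triple (y,z,w) forces y iz ≠ w iz
  have k_yzw := key hy2 hyU hz2 hzU hw2 hwU hizw t_yzw hbadY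
  -- but y iz = w iz since both differ from x0 iz
  have : y iz = w iz :=
    fin3_eq _ _ _ hypz hwpz hx0pz (fun h => k_yz.2 h) (fun h => k_zw.1 h)
  exact k_yzw.1 this
end

section
/- Let S ⊆ {0,1,2}^n be the set of vectors with exactly 2ℓ coordinates equal to 2, and let C ⊆ S be a (2ℓ+1)-trifferent code. Define the bipartite graph G on two copies of the ℓ-element subsets of [n], with an edge (I₁, I₂) whenever some x ∈ C has {i : x_i = 2} = I₁ ∪ I₂ with I₁, I₂ disjoint of size ℓ. Then G contains no path on four vertices (P₄). -/
/-- The auxiliary bipartite relation: `Sum.inl I₁` is joined to `Sum.inr I₂` when some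
codeword `x ∈ C` has its set of coordinates equal to `2` given by the disjoint union
`I₁ ∪ I₂` of two `ℓ`-element sets. -/
def edgeRel {n : ℕ} (C : Finset (Fin n → Fin 3)) (ℓ : ℕ) :
    (Finset (Fin n) ⊕ Finset (Fin n)) → (Finset (Fin n) ⊕ Finset (Fin n)) → Prop
  | Sum.inl I₁, Sum.inr I₂ => ∃ x ∈ C, I₁.card = ℓ ∧ I₂.card = ℓ ∧ Disjoint I₁ I₂ ∧
      (Finset.univ.filter fun i => x i = 2) = I₁ ∪ I₂
  | _, _ => False

lemma fin3_triffer : ∀ a b c : Fin 3, ({a, b, c} : Finset (Fin 3)) = Finset.univ →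
    a ≠ b ∧ a ≠ c ∧ b ≠ c ∧ (a = 2 ∨ b = 2 ∨ c = 2) := by decide

lemma core {n ℓ : ℕ} (C : Finset (Fin n → Fin 3)) (htr : IsTrifferent (2*ℓ+1) C)
    (A B Cs D : Finset (Fin n)) (x y z : Fin n → Fin 3)
    (hx : x ∈ C) (hy : y ∈ C) (hz : z ∈ C)
    (hA : A.card = ℓ) (hC : Cs.card = ℓ) (hD : D.card = ℓ)
    (dAB : Disjoint A B) (dBC : Disjoint Cs B) (dCD : Disjoint Cs D)
    (sx : (Finset.univ.filter fun i => x i = 2) = A ∪ B)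
    (sy : (Finset.univ.filter fun i => y i = 2) = B ∪ Cs)
    (sz : (Finset.univ.filter fun i => z i = 2) = Cs ∪ D)
    (hAC : A ≠ Cs) (hBD : B ≠ D) : False := by
  have hxy : x ≠ y := by
    rintro rfl
    rw [sx] at sy
    apply hAC
    have h1 : A = (A ∪ B) \ B := by
      rw [Finset.union_sdiff_cancel_right dAB]
    have h2 : Cs = (B ∪ Cs) \ B := by
      rw [Finset.union_sdiff_cancel_left dBC.symm]
    rw [h1, h2, sy]
  have hyz : y ≠ z := by
    rintro rfl
    rw [sy] at sz
    apply hBD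
    have h1 : B = (B ∪ Cs) \ Cs := by
      rw [Finset.union_sdiff_cancel_right dBC.symm]
    have h2 : D = (Cs ∪ D) \ Cs := by
      rw [Finset.union_sdiff_cancel_left dCD]
    rw [h1, h2, sz]
  have hxz : x ≠ z := by
    rintro rfl
    rw [sx] at sz
    apply hAC
    have hsub : Cs ⊆ A := by
      intro i hi
      have hi' : i ∈ A ∪ B := by rw [sz]; exact Finset.mem_union_left _ hi
      rcases Finset.mem_union.1 hi' with h | h
      · exact h
      · exact absurd (dBC.forall_ne_finset hi h) (by simp)
    exact ((Finset.eq_of_subset_of_card_le hsub (by rw [hA, hC])).symm)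
  have hle := htr x hx y hy z hz hxy hxz hyz
  have hsub : (Finset.univ.filter fun i => Triffers x y z i) ⊆ A ∪ D := by
    intro i hi
    have ht : Triffers x y z i := (Finset.mem_filter.1 hi).2
    obtain ⟨h12, h13, h23, htwo⟩ := fin3_triffer _ _ _ ht
    have memx : x i = 2 → i ∈ A ∪ B := fun h => by
      rw [← sx]; simp [h]
    have memy : y i = 2 → i ∈ B ∪ Cs := fun h => by
      rw [← sy]; simp [h]
    have memz : z i = 2 → i ∈ Cs ∪ D := fun h => by
      rw [← sz]; simp [h]
    have valx : i ∈ A ∪ B → x i = 2 := fun h => by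
      have : i ∈ Finset.univ.filter fun j => x j = 2 := by rw [sx]; exact h
      exact (Finset.mem_filter.1 this).2
    have valy : i ∈ B ∪ Cs → y i = 2 := fun h => by
      have : i ∈ Finset.univ.filter fun j => y j = 2 := by rw [sy]; exact h
      exact (Finset.mem_filter.1 this).2
    have valz : i ∈ Cs ∪ D → z i = 2 := fun h => by
      have : i ∈ Finset.univ.filter fun j => z j = 2 := by rw [sz]; exact h
      exact (Finset.mem_filter.1 this).2
    rcases htwo with h | h | h
    · rcases Finset.mem_union.1 (memx h) with hA' | hB'
      · exact Finset.mem_union_left _ hA'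
      · exact absurd (h.trans (valy (Finset.mem_union_left _ hB')).symm) h12
    · rcases Finset.mem_union.1 (memy h) with hB' | hC'
      · exact absurd ((valx (Finset.mem_union_right _ hB')).trans h.symm) h12
      · exact absurd (h.trans (valz (Finset.mem_union_left _ hC')).symm) h23
    · rcases Finset.mem_union.1 (memz h) with hC' | hD'
      · exact absurd ((valy (Finset.mem_union_right _ hC')).trans h.symm) h23
      · exact Finset.mem_union_right _ hD'
  have hcard : trifferCount x y z ≤ 2 * ℓ := by
    calc trifferCount x y z ≤ (A ∪ D).card := Finset.card_le_card hsub
    _ ≤ A.card + D.card := Finset.card_union_le _ _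
    _ = 2 * ℓ := by rw [hA, hD]; ring
  omega

theorem stmt8 {n ℓ : ℕ} (C : Finset (Fin n → Fin 3))
    (hS : ∀ x ∈ C, (Finset.univ.filter fun i => x i = 2).card = 2 * ℓ)
    (htr : IsTrifferent (2 * ℓ + 1) C) :
    ∀ a b c d : Finset (Fin n) ⊕ Finset (Fin n),
      a ≠ b → a ≠ c → a ≠ d → b ≠ c → b ≠ d → c ≠ d →
      ¬((SimpleGraph.fromRel (edgeRel C ℓ)).Adj a b ∧
        (SimpleGraph.fromRel (edgeRel C ℓ)).Adj b c ∧
        (SimpleGraph.fromRel (edgeRel C ℓ)).Adj c d) := by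
  rintro a b c d hab' hac had hbc' hbd hcd' ⟨hab, hbc, hcd⟩
  rcases a with A | A <;> rcases b with B | B <;> rcases c with Cs | Cs <;> rcases d with D | D <;>
    simp only [SimpleGraph.fromRel_adj, edgeRel, or_false, false_or, or_self] at hab hbc hcd <;>
    first
      | exact hab.2.elim
      | exact hbc.2.elim
      | exact hcd.2.elim
      | skip
  · -- inl A, inr B, inl Cs, inr D
    obtain ⟨-, x, hx, hcA, hcB, dAB, sx⟩ := hab
    obtain ⟨-, y, hy, hcC, hcB', dCB, sy⟩ := hbc
    obtain ⟨-, z, hz, hcC', hcD, dCD, sz⟩ := hcd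
    exact core C htr A B Cs D x y z hx hy hz hcA hcC hcD dAB dCB dCD sx
      (by rw [sy, Finset.union_comm]) sz (fun h => hac (by rw [h])) (fun h => hbd (by rw [h]))
  · -- inr A, inl B, inr Cs, inl D
    obtain ⟨-, x, hx, hcB, hcA, dBA, sx⟩ := hab
    obtain ⟨-, y, hy, hcB', hcC, dBC, sy⟩ := hbc
    obtain ⟨-, z, hz, hcD, hcC', dDC, sz⟩ := hcd
    exact core C htr A B Cs D x y z hx hy hz hcA hcC hcD dBA.symm dBC.symm dDC.symm
      (by rw [sx, Finset.union_comm]) sy (by rw [sz, Finset.union_comm])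
      (fun h => hac (by rw [h])) (fun h => hbd (by rw [h]))
end

section
/- T(n, 2ℓ+1) ≤ (3/2)^n · (C(n,ℓ)/C(n,2ℓ)) · 4(2ℓ+1), where T(n,m) is the maximum size of an m-trifferent ternary code of length n. -/
lemma fin3_ne {x y z : Fin 3} (h : ({x, y, z} : Finset (Fin 3)) = Finset.univ) : y ≠ z := by
  revert h; revert x y z; decide

lemma fin3_mem {x y z w : Fin 3} (h : ({x, y, z} : Finset (Fin 3)) = Finset.univ) :
    w = x ∨ w = y ∨ w = z := by
  revert h; revert x y z w; decide

lemma fin3_succ_ne : ∀ v : Fin 3, v + 1 ≠ v := by decide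

lemma lemmaA {n ℓ : ℕ} {C : Finset (Fin n → Fin 3)} (hC : IsTrifferent (2*ℓ+1) C)
    (q : Fin n → Fin 3) :
    (C.filter fun w => (Finset.univ.filter fun i => w i = q i).card = ℓ).card ≤ 2^ℓ + 1 := by
  set S := C.filter fun w => (Finset.univ.filter fun i => w i = q i).card = ℓ with hSdef
  rcases S.eq_empty_or_nonempty with he | ⟨a, ha⟩
  · simp [he]
  · have haC : a ∈ C := (Finset.mem_filter.mp ha).1
    set Ba := Finset.univ.filter (fun i => a i = q i) with hBa
    have hBacard : Ba.card = ℓ := (Finset.mem_filter.mp ha).2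
    -- the injection
    set ψ : (Fin n → Fin 3) → (Fin n → Fin 3) :=
      fun w i => if i ∈ Ba then (if w i = q i then q i + 1 else w i) else 0 with hψ
    have hmaps : ∀ w ∈ S.erase a, ψ w ∈
        Fintype.piFinset (fun i => if i ∈ Ba then ({q i}ᶜ : Finset (Fin 3)) else {0}) := by
      intro w _
      rw [Fintype.mem_piFinset]
      intro i
      by_cases hi : i ∈ Ba
      · simp only [hψ, hi, if_true, Finset.mem_compl, Finset.mem_singleton]
        by_cases hw : w i = q i
        · simp [hw, fin3_succ_ne (q i)]
        · simp [hw]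
      · simp [hψ, hi]
    have hinj : Set.InjOn ψ (S.erase a) := by
      intro w₁ hw₁ w₂ hw₂ heq
      by_contra hne
      have hw₁S := Finset.mem_of_mem_erase hw₁
      have hw₂S := Finset.mem_of_mem_erase hw₂
      have hw₁a : w₁ ≠ a := Finset.ne_of_mem_erase hw₁
      have hw₂a : w₂ ≠ a := Finset.ne_of_mem_erase hw₂
      have h₁C : w₁ ∈ C := (Finset.mem_filter.mp hw₁S).1
      have h₂C : w₂ ∈ C := (Finset.mem_filter.mp hw₂S).1
      have h₁card : (Finset.univ.filter fun i => w₁ i = q i).card = ℓ :=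
        (Finset.mem_filter.mp hw₁S).2
      have h₂card : (Finset.univ.filter fun i => w₂ i = q i).card = ℓ :=
        (Finset.mem_filter.mp hw₂S).2
      have htr : 2*ℓ+1 ≤ trifferCount a w₁ w₂ :=
        hC a haC w₁ h₁C w₂ h₂C (Ne.symm hw₁a) (Ne.symm hw₂a) hne
      set Tf := Finset.univ.filter (fun i => Triffers a w₁ w₂ i) with hTf
      set B₁ := Finset.univ.filter (fun i => w₁ i = q i) with hB₁
      set B₂ := Finset.univ.filter (fun i => w₂ i = q i) with hB₂
      have hsub : Tf ⊆ Ba ∪ (B₁ ∪ B₂) := by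
        intro i hi
        have hT : Triffers a w₁ w₂ i := (Finset.mem_filter.mp hi).2
        rcases fin3_mem (w := q i) hT with h | h | h
        · exact Finset.mem_union_left _ (Finset.mem_filter.mpr ⟨Finset.mem_univ _, h.symm⟩)
        · exact Finset.mem_union_right _ (Finset.mem_union_left _
            (Finset.mem_filter.mpr ⟨Finset.mem_univ _, h.symm⟩))
        · exact Finset.mem_union_right _ (Finset.mem_union_right _
            (Finset.mem_filter.mpr ⟨Finset.mem_univ _, h.symm⟩))
      have hnotsub : ¬ Tf ⊆ B₁ ∪ B₂ := by
        intro hcon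
        have hTfc : trifferCount a w₁ w₂ = Tf.card := rfl
        rw [hTfc] at htr
        have h1 := Finset.card_le_card hcon
        have h2 := Finset.card_union_le B₁ B₂
        omega
      obtain ⟨i, hiTf, hiB⟩ := Finset.not_subset.mp hnotsub
      have hiBa : i ∈ Ba := by
        rcases Finset.mem_union.mp (hsub hiTf) with h | h
        · exact h
        · exact absurd h hiB
      have hi1 : w₁ i ≠ q i := by
        intro hcon
        exact hiB (Finset.mem_union_left _ (Finset.mem_filter.mpr ⟨Finset.mem_univ _, hcon⟩))
      have hi2 : w₂ i ≠ q i := by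
        intro hcon
        exact hiB (Finset.mem_union_right _ (Finset.mem_filter.mpr ⟨Finset.mem_univ _, hcon⟩))
      have hT : Triffers a w₁ w₂ i := (Finset.mem_filter.mp hiTf).2
      have hne12 : w₁ i ≠ w₂ i := fin3_ne hT
      have : ψ w₁ i = ψ w₂ i := congrFun heq i
      simp only [hψ, hiBa, if_true, hi1, hi2, if_false] at this
      exact hne12 this
    have hcard1 : (S.erase a).card ≤
        (Fintype.piFinset (fun i => if i ∈ Ba then ({q i}ᶜ : Finset (Fin 3)) else {0})).card := by
      classical
      exact Finset.card_le_card_of_injOn ψ hmaps hinj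
    have hcard2 : (Fintype.piFinset
        (fun i => if i ∈ Ba then ({q i}ᶜ : Finset (Fin 3)) else {0})).card = 2 ^ ℓ := by
      rw [Fintype.card_piFinset]
      have : ∀ i, ((if i ∈ Ba then ({q i}ᶜ : Finset (Fin 3)) else {0}).card)
          = if i ∈ Ba then 2 else 1 := by
        intro i
        by_cases hi : i ∈ Ba <;> simp [hi, Finset.card_compl]
      rw [Finset.prod_congr rfl (fun i _ => this i)]
      rw [Finset.prod_ite_mem, Finset.univ_inter, Finset.prod_const, hBacard]
    have := Finset.card_erase_add_one ha
    omega

lemma countQ {n ℓ : ℕ} (w : Fin n → Fin 3) :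
    n.choose ℓ * 2^(n-ℓ) ≤
      (Finset.univ.filter fun q : Fin n → Fin 3 =>
        (Finset.univ.filter fun i => w i = q i).card = ℓ).card := by
  classical
  set F : Finset (Fin n) → Finset (Fin n → Fin 3) :=
    fun A => Fintype.piFinset (fun i => if i ∈ A then ({w i} : Finset (Fin 3)) else {w i}ᶜ)
    with hF
  have hmemF : ∀ A : Finset (Fin n), ∀ q ∈ F A,
      (Finset.univ.filter fun i => w i = q i) = A := by
    intro A q hq
    rw [hF, Fintype.mem_piFinset] at hq
    ext i
    simp only [Finset.mem_filter, Finset.mem_univ, true_and]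
    constructor
    · intro hwq
      by_contra hi
      have h := hq i
      rw [if_neg hi] at h
      simp only [Finset.mem_compl, Finset.mem_singleton] at h
      exact h hwq.symm
    · intro hi
      have h := hq i
      rw [if_pos hi] at h
      exact (Finset.mem_singleton.mp h).symm
  have hcardF : ∀ A ∈ Finset.powersetCard ℓ (Finset.univ : Finset (Fin n)),
      (F A).card = 2^(n-ℓ) := by
    intro A hA
    have hAcard : A.card = ℓ := (Finset.mem_powersetCard.mp hA).2
    rw [hF]
    rw [Fintype.card_piFinset]
    have h1 : ∀ i, ((if i ∈ A then ({w i} : Finset (Fin 3)) else {w i}ᶜ).card)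
        = if i ∈ Aᶜ then 2 else 1 := by
      intro i
      by_cases hi : i ∈ A <;> simp [hi, Finset.card_compl]
    rw [Finset.prod_congr rfl (fun i _ => h1 i), Finset.prod_ite_mem,
      Finset.univ_inter, Finset.prod_const, Finset.card_compl, hAcard]
    simp
  have hdisj : ∀ A ∈ Finset.powersetCard ℓ (Finset.univ : Finset (Fin n)),
      ∀ B ∈ Finset.powersetCard ℓ (Finset.univ : Finset (Fin n)),
      A ≠ B → Disjoint (F A) (F B) := by
    intro A _ B _ hAB
    rw [Finset.disjoint_left]
    intro q hqA hqB
    exact hAB ((hmemF A q hqA).symm.trans (hmemF B q hqB))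
  have hsubset : (Finset.powersetCard ℓ (Finset.univ : Finset (Fin n))).biUnion F ⊆
      Finset.univ.filter fun q : Fin n → Fin 3 =>
        (Finset.univ.filter fun i => w i = q i).card = ℓ := by
    intro q hq
    obtain ⟨A, hA, hqA⟩ := Finset.mem_biUnion.mp hq
    refine Finset.mem_filter.mpr ⟨Finset.mem_univ _, ?_⟩
    rw [hmemF A q hqA]
    exact (Finset.mem_powersetCard.mp hA).2
  calc n.choose ℓ * 2^(n-ℓ)
      = ∑ _A ∈ Finset.powersetCard ℓ (Finset.univ : Finset (Fin n)), 2^(n-ℓ) := by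
        rw [Finset.sum_const, Finset.card_powersetCard, Finset.card_univ,
          Fintype.card_fin, smul_eq_mul]
    _ = ∑ A ∈ Finset.powersetCard ℓ (Finset.univ : Finset (Fin n)), (F A).card :=
        (Finset.sum_congr rfl (fun A hA => (hcardF A hA).symm))
    _ = ((Finset.powersetCard ℓ (Finset.univ : Finset (Fin n))).biUnion F).card :=
        (Finset.card_biUnion hdisj).symm
    _ ≤ _ := Finset.card_le_card hsubset

lemma keyCount {n ℓ : ℕ} {C : Finset (Fin n → Fin 3)} (hC : IsTrifferent (2*ℓ+1) C) :
    C.card * (n.choose ℓ * 2^(n-ℓ)) ≤ 3^n * (2^ℓ + 1) := by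
  classical
  calc C.card * (n.choose ℓ * 2^(n-ℓ))
      = ∑ _w ∈ C, (n.choose ℓ * 2^(n-ℓ)) := by rw [Finset.sum_const, smul_eq_mul]
    _ ≤ ∑ w ∈ C, (Finset.univ.filter fun q : Fin n → Fin 3 =>
          (Finset.univ.filter fun i => w i = q i).card = ℓ).card :=
        Finset.sum_le_sum (fun w _ => countQ w)
    _ = ∑ w ∈ C, ∑ q : Fin n → Fin 3,
          (if (Finset.univ.filter fun i => w i = q i).card = ℓ then 1 else 0) := by
        refine Finset.sum_congr rfl fun w _ => ?_
        rw [Finset.card_filter]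
    _ = ∑ q : Fin n → Fin 3, ∑ w ∈ C,
          (if (Finset.univ.filter fun i => w i = q i).card = ℓ then 1 else 0) :=
        Finset.sum_comm
    _ = ∑ q : Fin n → Fin 3,
          (C.filter fun w => (Finset.univ.filter fun i => w i = q i).card = ℓ).card := by
        refine Finset.sum_congr rfl fun q _ => ?_
        rw [Finset.card_filter]
    _ ≤ ∑ _q : Fin n → Fin 3, (2^ℓ + 1) :=
        Finset.sum_le_sum (fun q _ => lemmaA hC q)
    _ = 3^n * (2^ℓ + 1) := by
        rw [Finset.sum_const, Finset.card_univ, smul_eq_mul]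
        congr 1
        simp

lemma arith {n ℓ : ℕ} (h : 2*ℓ ≤ n) :
    (3^n * (2^ℓ + 1)) * (n.choose (2*ℓ) * 2^n) ≤
      (3^n * (4*(2*ℓ+1)) * n.choose ℓ) * (n.choose ℓ * 2^(n-ℓ)) := by
  have hl : ℓ ≤ n := by omega
  have hident : n.choose (2*ℓ) * (2*ℓ).choose ℓ = n.choose ℓ * (n-ℓ).choose ℓ := by
    have := Nat.choose_mul (n := n) (k := 2*ℓ) (s := ℓ) (by omega)
    simpa [show 2*ℓ - ℓ = ℓ by omega] using this
  have hmono : (n-ℓ).choose ℓ ≤ n.choose ℓ := Nat.choose_le_choose ℓ (by omega)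
  have hcb : 4^ℓ ≤ (2*ℓ+1) * (2*ℓ).choose ℓ := by
    rcases Nat.eq_zero_or_pos ℓ with rfl | hpos
    · simp
    · have h1 : 4^ℓ ≤ 2*ℓ * Nat.centralBinom ℓ :=
        Nat.four_pow_le_two_mul_self_mul_centralBinom ℓ hpos
      have h2 : Nat.centralBinom ℓ = (2*ℓ).choose ℓ := rfl
      rw [h2] at h1
      calc 4^ℓ ≤ 2*ℓ * (2*ℓ).choose ℓ := h1
        _ ≤ (2*ℓ+1) * (2*ℓ).choose ℓ := Nat.mul_le_mul_right _ (by omega)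
  -- core inequality
  have hcore : (2^ℓ + 1) * (n.choose (2*ℓ)) * 2^ℓ ≤ 4*(2*ℓ+1) * (n.choose ℓ * n.choose ℓ) := by
    calc (2^ℓ + 1) * (n.choose (2*ℓ)) * 2^ℓ
        ≤ (2*2^ℓ) * (n.choose (2*ℓ)) * 2^ℓ := by
          apply Nat.mul_le_mul_right
          apply Nat.mul_le_mul_right
          have h1 : (1:ℕ) ≤ 2^ℓ := Nat.one_le_two_pow
          omega
      _ = 2 * 4^ℓ * n.choose (2*ℓ) := by ring_nf; rw [show 4 = 2*2 by rfl, mul_pow]; ring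
      _ ≤ 2 * ((2*ℓ+1) * (2*ℓ).choose ℓ) * n.choose (2*ℓ) := by
          apply Nat.mul_le_mul_right
          exact Nat.mul_le_mul_left _ hcb
      _ = 2 * (2*ℓ+1) * (n.choose (2*ℓ) * (2*ℓ).choose ℓ) := by ring
      _ = 2 * (2*ℓ+1) * (n.choose ℓ * (n-ℓ).choose ℓ) := by rw [hident]
      _ ≤ 2 * (2*ℓ+1) * (n.choose ℓ * n.choose ℓ) := by
          apply Nat.mul_le_mul_left
          exact Nat.mul_le_mul_left _ hmono
      _ ≤ 4*(2*ℓ+1) * (n.choose ℓ * n.choose ℓ) := by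
          apply Nat.mul_le_mul_right
          apply Nat.mul_le_mul_right
          omega
  have hpow : (2:ℕ)^n = 2^(n-ℓ) * 2^ℓ := by
    rw [← pow_add]
    congr 1
    omega
  calc (3^n * (2^ℓ + 1)) * (n.choose (2*ℓ) * 2^n)
      = (3^n * 2^(n-ℓ)) * ((2^ℓ + 1) * (n.choose (2*ℓ)) * 2^ℓ) := by rw [hpow]; ring
    _ ≤ (3^n * 2^(n-ℓ)) * (4*(2*ℓ+1) * (n.choose ℓ * n.choose ℓ)) :=
        Nat.mul_le_mul_left _ hcore
    _ = (3^n * (4*(2*ℓ+1)) * n.choose ℓ) * (n.choose ℓ * 2^(n-ℓ)) := by ring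

theorem stmt9 (n ℓ : ℕ) (h : 2 * ℓ ≤ n) :
    (T n (2 * ℓ + 1) : ℝ) ≤
      (3 / 2) ^ n * ((n.choose ℓ : ℝ) / (n.choose (2 * ℓ) : ℝ)) * (4 * (2 * ℓ + 1)) := by
  have hl : ℓ ≤ n := by omega
  have hXpos : 0 < n.choose ℓ * 2^(n-ℓ) := by
    have := Nat.choose_pos hl
    positivity
  have hTle : T n (2*ℓ+1) ≤ (3^n * (2^ℓ+1)) / (n.choose ℓ * 2^(n-ℓ)) := by
    apply csSup_le
    · exact ⟨0, ∅, fun a ha => absurd ha (Finset.notMem_empty a), Finset.card_empty⟩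
    · rintro k ⟨C, hC, rfl⟩
      exact (Nat.le_div_iff_mul_le hXpos).mpr (keyCount hC)
  have hT2 : T n (2*ℓ+1) * (n.choose ℓ * 2^(n-ℓ)) ≤ 3^n * (2^ℓ+1) :=
    le_trans (Nat.mul_le_mul_right _ hTle) (Nat.div_mul_le_self _ _)
  have hnat2 : T n (2*ℓ+1) * (n.choose (2*ℓ) * 2^n) ≤ 3^n * (4*(2*ℓ+1)) * n.choose ℓ := by
    have h1 : T n (2*ℓ+1) * (n.choose ℓ * 2^(n-ℓ)) * (n.choose (2*ℓ) * 2^n) ≤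
        (3^n * (2^ℓ+1)) * (n.choose (2*ℓ) * 2^n) := Nat.mul_le_mul_right _ hT2
    have h2 := le_trans h1 (arith h)
    have h3 : T n (2*ℓ+1) * (n.choose (2*ℓ) * 2^n) * (n.choose ℓ * 2^(n-ℓ)) ≤
        (3^n * (4*(2*ℓ+1)) * n.choose ℓ) * (n.choose ℓ * 2^(n-ℓ)) := by
      calc T n (2*ℓ+1) * (n.choose (2*ℓ) * 2^n) * (n.choose ℓ * 2^(n-ℓ))
          = T n (2*ℓ+1) * (n.choose ℓ * 2^(n-ℓ)) * (n.choose (2*ℓ) * 2^n) := by ring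
        _ ≤ _ := h2
    exact Nat.le_of_mul_le_mul_right h3 hXpos
  have hc2pos : (0:ℝ) < (n.choose (2*ℓ) : ℝ) := by
    exact_mod_cast Nat.choose_pos h
  have hden : (0:ℝ) < (n.choose (2*ℓ) : ℝ) * 2^n := by positivity
  have hrw : (3 / 2 : ℝ) ^ n * ((n.choose ℓ : ℝ) / (n.choose (2 * ℓ) : ℝ)) * (4 * (2 * ℓ + 1))
      = ((3:ℝ)^n * (4*(2*(ℓ:ℝ)+1)) * (n.choose ℓ : ℝ)) / ((n.choose (2*ℓ) : ℝ) * 2^n) := by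
    rw [div_pow]
    field_simp
  rw [hrw, le_div_iff₀ hden]
  exact_mod_cast hnat2
end

section
/- For 1 ≤ m < (2/9)n, T(n, m) ≥ (2√2/3)·2^{nh/2} − 1, where h = H(m/n, 2/9) = (m/n)·log₂((m/n)/(2/9)) + (1 − m/n)·log₂((1 − m/n)/(7/9)) is the relative entropy. (Proved by the alteration method: choose t = ⌊√2·2^{nh/2}⌋ random codewords and delete one codeword from each bad triple.) -/
section Aux

open Finset

lemma count_comp {W : Type*} [Fintype W] [DecidableEq W] {s t : ℕ} (g : Fin s → Fin t)
    (hg : Function.Injective g) (Q : (Fin s → W) → Prop) [DecidablePred Q] :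
    (Finset.univ.filter fun ω : Fin t → W => Q (ω ∘ g)).card
      = (Finset.univ.filter Q).card * (Fintype.card W) ^ (t - s) := by
  classical
  rw [← Fintype.card_subtype, ← Fintype.card_subtype]
  let e0 : Fin s ≃ {x : Fin t // x ∈ Set.range g} := Equiv.ofInjective g hg
  let F : (Fin t → W) ≃ (Fin s → W) × ({x : Fin t // x ∉ Set.range g} → W) :=
    (Equiv.piEquivPiSubtypeProd (fun x => x ∈ Set.range g) (fun _ => W)).trans
      (Equiv.prodCongr (Equiv.arrowCongr e0 (Equiv.refl W)).symm (Equiv.refl _))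
  have hF : ∀ ω : Fin t → W, (F ω).1 = ω ∘ g := by
    intro ω; funext a
    show ω ((e0 a) : Fin t) = ω (g a)
    rfl
  have E : {ω : Fin t → W // Q (ω ∘ g)} ≃
      {z : (Fin s → W) × ({x : Fin t // x ∉ Set.range g} → W) // Q z.1} :=
    Equiv.subtypeEquiv F (by intro ω; rw [hF ω])
  have E2 : {z : (Fin s → W) × ({x : Fin t // x ∉ Set.range g} → W) // Q z.1} ≃
      {v : Fin s → W // Q v} × ({x : Fin t // x ∉ Set.range g} → W) :=
    { toFun := fun z => (⟨z.1.1, z.2⟩, z.1.2)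
      invFun := fun y => ⟨(y.1.1, y.2), y.1.2⟩
      left_inv := by rintro ⟨⟨a, b⟩, h⟩; rfl
      right_inv := by rintro ⟨⟨a, h⟩, b⟩; rfl }
  rw [Fintype.card_congr (E.trans E2), Fintype.card_prod, Fintype.card_fun]
  congr 2
  rw [Fintype.card_subtype_compl]
  have h1 : Fintype.card {x : Fin t // x ∈ Set.range g} = s := by
    rw [← Fintype.card_congr e0, Fintype.card_fin]
  rw [h1, Fintype.card_fin]

lemma tc_swap12 {n : ℕ} (a b c : Fin n → Fin 3) : trifferCount b a c = trifferCount a b c := by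
  unfold trifferCount
  congr 1
  apply Finset.filter_congr
  intro i _
  unfold Triffers
  rw [Finset.insert_comm]

lemma tc_swap23 {n : ℕ} (a b c : Fin n → Fin 3) : trifferCount a c b = trifferCount a b c := by
  unfold trifferCount
  congr 1
  apply Finset.filter_congr
  intro i _
  unfold Triffers
  rw [Finset.pair_comm]

lemma tc_sorted {t n : ℕ} (ω : Fin t → (Fin n → Fin 3)) (x y z : Fin t)
    (hxy : x ≠ y) (hxz : x ≠ z) (hyz : y ≠ z) :
    ∃ a b c : Fin t, a < b ∧ b < c ∧ (a = x ∨ a = y ∨ a = z) ∧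
      trifferCount (ω a) (ω b) (ω c) = trifferCount (ω x) (ω y) (ω z) := by
  rcases lt_or_gt_of_ne hxy with h1 | h1 <;> rcases lt_or_gt_of_ne hxz with h2 | h2 <;>
    rcases lt_or_gt_of_ne hyz with h3 | h3
  · exact ⟨x, y, z, h1, h3, Or.inl rfl, rfl⟩
  · exact ⟨x, z, y, h2, h3, Or.inl rfl, tc_swap23 ..⟩
  · exact absurd (h1.trans h3) (lt_asymm h2)
  · exact ⟨z, x, y, h2, h1, Or.inr (Or.inr rfl), by rw [tc_swap12, tc_swap23]⟩
  · exact ⟨y, x, z, h1, h2, Or.inr (Or.inl rfl), tc_swap12 ..⟩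
  · exact absurd (h2.trans h3) (lt_asymm h1)
  · exact ⟨y, z, x, h3, h2, Or.inr (Or.inl rfl), by rw [tc_swap23, tc_swap12]⟩
  · exact ⟨z, y, x, h3, h1, Or.inr (Or.inr rfl), by rw [tc_swap12, tc_swap23, tc_swap12]⟩

lemma min_triple {t : ℕ} {i j k : Fin t} (h1 : i < j) (h2 : j < k) :
    ({i, j, k} : Finset (Fin t)).min = (i : WithTop (Fin t)) := by
  apply le_antisymm (Finset.min_le (by simp))
  apply Finset.le_min
  intro y hy
  simp only [Finset.mem_insert, Finset.mem_singleton] at hy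
  rcases hy with rfl | rfl | rfl
  · exact le_refl _
  · exact WithTop.coe_le_coe.2 h1.le
  · exact WithTop.coe_le_coe.2 (h1.trans h2).le

lemma min_pair {t : ℕ} {i j : Fin t} (h1 : i < j) :
    ({i, j} : Finset (Fin t)).min = (i : WithTop (Fin t)) := by
  apply le_antisymm (Finset.min_le (by simp))
  apply Finset.le_min
  intro y hy
  simp only [Finset.mem_insert, Finset.mem_singleton] at hy
  rcases hy with rfl | rfl
  · exact le_refl _
  · exact WithTop.coe_le_coe.2 h1.le

lemma alteration {n m t : ℕ} (ω : Fin t → (Fin n → Fin 3)) :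
    ∃ C : Finset (Fin n → Fin 3), IsTrifferent m C ∧
      t ≤ C.card
        + ((Finset.univ.powersetCard 3).filter fun S : Finset (Fin t) =>
            ∃ i ∈ S, ∃ j ∈ S, ∃ k ∈ S, i < j ∧ j < k ∧ trifferCount (ω i) (ω j) (ω k) < m).card
        + ((Finset.univ.powersetCard 2).filter fun S : Finset (Fin t) =>
            ∃ i ∈ S, ∃ j ∈ S, i < j ∧ ω i = ω j).card := by
  classical
  set P3 := (Finset.univ.powersetCard 3).filter fun S : Finset (Fin t) =>
      ∃ i ∈ S, ∃ j ∈ S, ∃ k ∈ S, i < j ∧ j < k ∧ trifferCount (ω i) (ω j) (ω k) < m with hP3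
  set P2 := (Finset.univ.powersetCard 2).filter fun S : Finset (Fin t) =>
      ∃ i ∈ S, ∃ j ∈ S, i < j ∧ ω i = ω j with hP2
  set D3 : Finset (Fin t) := Finset.univ.filter
      (fun i => ∃ j, ∃ k, i < j ∧ j < k ∧ trifferCount (ω i) (ω j) (ω k) < m) with hD3
  set D2 : Finset (Fin t) := Finset.univ.filter (fun i => ∃ j, i < j ∧ ω i = ω j) with hD2
  set D := D3 ∪ D2 with hD
  have hcard3 : D3.card ≤ P3.card := by
    apply Finset.card_le_card_of_injOn
      (fun i => if h : ∃ j, ∃ k, i < j ∧ j < k ∧ trifferCount (ω i) (ω j) (ω k) < m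
        then {i, h.choose, h.choose_spec.choose} else ∅)
    · intro i hi
      rw [hD3, Finset.mem_coe, Finset.mem_filter] at hi
      obtain ⟨-, h⟩ := hi
      simp only [dif_pos h]
      obtain ⟨h1, h2, h3⟩ := h.choose_spec.choose_spec
      rw [hP3, Finset.mem_coe, Finset.mem_filter, Finset.mem_powersetCard]
      refine ⟨⟨Finset.subset_univ _, ?_⟩, i, by simp, h.choose, by simp, h.choose_spec.choose,
        by simp, h1, h2, h3⟩
      rw [Finset.card_insert_of_notMem, Finset.card_insert_of_notMem, Finset.card_singleton]
      · simp only [Finset.mem_singleton]; exact h2.ne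
      · simp only [Finset.mem_insert, Finset.mem_singleton]
        push_neg
        exact ⟨h1.ne, (h1.trans h2).ne⟩
    · intro i hi i' hi' heq
      rw [Finset.mem_coe, hD3, Finset.mem_filter] at hi hi'
      obtain ⟨-, h⟩ := hi
      obtain ⟨-, h'⟩ := hi'
      simp only at heq
      rw [dif_pos h, dif_pos h'] at heq
      obtain ⟨ha1, ha2, -⟩ := h.choose_spec.choose_spec
      obtain ⟨hb1, hb2, -⟩ := h'.choose_spec.choose_spec
      have e1 := min_triple ha1 ha2
      rw [heq, min_triple hb1 hb2] at e1
      exact (WithTop.coe_inj.1 e1).symm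
  have hcard2 : D2.card ≤ P2.card := by
    apply Finset.card_le_card_of_injOn
      (fun i => if h : ∃ j, i < j ∧ ω i = ω j then {i, h.choose} else ∅)
    · intro i hi
      rw [hD2, Finset.mem_coe, Finset.mem_filter] at hi
      obtain ⟨-, h⟩ := hi
      simp only [dif_pos h]
      obtain ⟨h1, h2⟩ := h.choose_spec
      rw [hP2, Finset.mem_coe, Finset.mem_filter, Finset.mem_powersetCard]
      refine ⟨⟨Finset.subset_univ _, ?_⟩, i, by simp, h.choose, by simp, h1, h2⟩
      rw [Finset.card_insert_of_notMem, Finset.card_singleton]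
      simp only [Finset.mem_singleton]; exact h1.ne
    · intro i hi i' hi' heq
      rw [Finset.mem_coe, hD2, Finset.mem_filter] at hi hi'
      obtain ⟨-, h⟩ := hi
      obtain ⟨-, h'⟩ := hi'
      simp only at heq
      rw [dif_pos h, dif_pos h'] at heq
      obtain ⟨ha1, -⟩ := h.choose_spec
      obtain ⟨hb1, -⟩ := h'.choose_spec
      have e1 := min_pair ha1
      rw [heq, min_pair hb1] at e1
      exact (WithTop.coe_inj.1 e1).symm
  refine ⟨Finset.image ω Dᶜ, ?_, ?_⟩
  · intro a ha b hb c hc hab hac hbc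
    rw [Finset.mem_image] at ha hb hc
    obtain ⟨x, hx, rfl⟩ := ha
    obtain ⟨y, hy, rfl⟩ := hb
    obtain ⟨z, hz, rfl⟩ := hc
    have hxy : x ≠ y := fun e => hab (by rw [e])
    have hxz : x ≠ z := fun e => hac (by rw [e])
    have hyz : y ≠ z := fun e => hbc (by rw [e])
    obtain ⟨a', b', c', h1, h2, hmem, he⟩ := tc_sorted ω x y z hxy hxz hyz
    rw [← he]
    by_contra hlt
    push_neg at hlt
    have : a' ∈ D := by
      rw [hD, Finset.mem_union]
      exact Or.inl (Finset.mem_filter.2 ⟨Finset.mem_univ _, b', c', h1, h2, hlt⟩)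
    rcases hmem with rfl | rfl | rfl
    · exact (Finset.mem_compl.1 hx) this
    · exact (Finset.mem_compl.1 hy) this
    · exact (Finset.mem_compl.1 hz) this
  · have hinj : Set.InjOn ω ↑(Dᶜ) := by
      intro i hi j hj hij
      rw [Finset.mem_coe, Finset.mem_compl] at hi hj
      by_contra hne
      rcases lt_or_gt_of_ne hne with hlt | hlt
      · refine hi ?_
        rw [hD, Finset.mem_union]
        exact Or.inr (Finset.mem_filter.2 ⟨Finset.mem_univ _, j, hlt, hij⟩)
      · refine hj ?_
        rw [hD, Finset.mem_union]
        exact Or.inr (Finset.mem_filter.2 ⟨Finset.mem_univ _, i, hlt, hij.symm⟩)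
    rw [Finset.card_image_of_injOn hinj, Finset.card_compl, Fintype.card_fin]
    have hDc : D.card ≤ P3.card + P2.card :=
      (Finset.card_union_le _ _).trans (Nat.add_le_add hcard3 hcard2)
    omega

lemma count_badS {n m t : ℕ} (S : Finset (Fin t)) (hS : S.card = 3) :
    (Finset.univ.filter fun ω : Fin t → (Fin n → Fin 3) =>
        ∃ i ∈ S, ∃ j ∈ S, ∃ k ∈ S, i < j ∧ j < k ∧ trifferCount (ω i) (ω j) (ω k) < m).card
      = (Finset.univ.filter fun v : Fin 3 → (Fin n → Fin 3) =>
          trifferCount (v 0) (v 1) (v 2) < m).card * (3 ^ n) ^ (t - 3) := by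
  classical
  have e := S.orderIsoOfFin hS
  set g : Fin 3 → Fin t := fun a => (e a : Fin t) with hg
  have hginj : Function.Injective g := by
    intro a b hab
    exact e.injective (Subtype.ext hab)
  have hlt : ∀ a b : Fin 3, a < b → g a < g b := by
    intro a b hab
    exact (Subtype.coe_lt_coe).2 (e.strictMono hab)
  have hiff : ∀ ω : Fin t → (Fin n → Fin 3),
      (∃ i ∈ S, ∃ j ∈ S, ∃ k ∈ S, i < j ∧ j < k ∧ trifferCount (ω i) (ω j) (ω k) < m)
        ↔ trifferCount ((ω ∘ g) 0) ((ω ∘ g) 1) ((ω ∘ g) 2) < m := by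
    intro ω
    constructor
    · rintro ⟨i, hi, j, hj, k, hk, h1, h2, h3⟩
      obtain ⟨a, ha⟩ := e.surjective ⟨i, hi⟩
      obtain ⟨b, hb⟩ := e.surjective ⟨j, hj⟩
      obtain ⟨c, hc⟩ := e.surjective ⟨k, hk⟩
      have hia : g a = i := by simp only [hg, ha]
      have hjb : g b = j := by simp only [hg, hb]
      have hkc : g c = k := by simp only [hg, hc]
      have hab : a < b := by
        have := h1
        rw [← hia, ← hjb] at this
        exact e.lt_iff_lt.1 (Subtype.coe_lt_coe.1 this)
      have hbc : b < c := by
        have := h2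
        rw [← hjb, ← hkc] at this
        exact e.lt_iff_lt.1 (Subtype.coe_lt_coe.1 this)
      have ha0 : a = 0 := by
        have h1 := hab
        have h2 := hbc
        rw [Fin.lt_def] at h1 h2
        have := b.isLt
        have := c.isLt
        apply Fin.ext
        simp only [Fin.val_zero]
        omega
      have hb1 : b = 1 := by
        have h1 := hab
        have h2 := hbc
        rw [Fin.lt_def] at h1 h2
        have := c.isLt
        apply Fin.ext
        simp only [Fin.val_one]
        omega
      have hc2 : c = 2 := by
        have h1 := hab
        have h2 := hbc
        rw [Fin.lt_def] at h1 h2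
        have := c.isLt
        apply Fin.ext
        simp only [Fin.val_two]
        omega
      subst ha0 hb1 hc2
      simpa only [Function.comp_apply, hia, hjb, hkc] using h3
    · intro h
      refine ⟨g 0, (e 0).2, g 1, (e 1).2, g 2, (e 2).2, hlt 0 1 (by decide),
        hlt 1 2 (by decide), h⟩
  have : (Finset.univ.filter fun ω : Fin t → (Fin n → Fin 3) =>
      ∃ i ∈ S, ∃ j ∈ S, ∃ k ∈ S, i < j ∧ j < k ∧ trifferCount (ω i) (ω j) (ω k) < m)
      = (Finset.univ.filter fun ω : Fin t → (Fin n → Fin 3) =>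
        (fun v : Fin 3 → (Fin n → Fin 3) => trifferCount (v 0) (v 1) (v 2) < m) (ω ∘ g)) := by
    apply Finset.filter_congr
    intro ω _
    simpa using hiff ω
  rw [this, count_comp g hginj (fun v => trifferCount (v 0) (v 1) (v 2) < m)]
  congr 2
  rw [Fintype.card_fun, Fintype.card_fin, Fintype.card_fin]

lemma count_pairS {n t : ℕ} (S : Finset (Fin t)) (hS : S.card = 2) :
    (Finset.univ.filter fun ω : Fin t → (Fin n → Fin 3) =>
        ∃ i ∈ S, ∃ j ∈ S, i < j ∧ ω i = ω j).card
      = 3 ^ n * (3 ^ n) ^ (t - 2) := by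
  classical
  have e := S.orderIsoOfFin hS
  set g : Fin 2 → Fin t := fun a => (e a : Fin t) with hg
  have hginj : Function.Injective g := by
    intro a b hab
    exact e.injective (Subtype.ext hab)
  have hlt01 : g 0 < g 1 := (Subtype.coe_lt_coe).2 (e.strictMono (by decide))
  have hiff : ∀ ω : Fin t → (Fin n → Fin 3),
      (∃ i ∈ S, ∃ j ∈ S, i < j ∧ ω i = ω j) ↔ (ω ∘ g) 0 = (ω ∘ g) 1 := by
    intro ω
    constructor
    · rintro ⟨i, hi, j, hj, h1, h2⟩
      obtain ⟨a, ha⟩ := e.surjective ⟨i, hi⟩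
      obtain ⟨b, hb⟩ := e.surjective ⟨j, hj⟩
      have hia : g a = i := by simp only [hg, ha]
      have hjb : g b = j := by simp only [hg, hb]
      have hab : a < b := by
        have := h1
        rw [← hia, ← hjb] at this
        exact e.lt_iff_lt.1 (Subtype.coe_lt_coe.1 this)
      have ha0 : a = 0 := by
        rw [Fin.lt_def] at hab
        have := b.isLt
        apply Fin.ext
        simp only [Fin.val_zero]
        omega
      have hb1 : b = 1 := by
        rw [Fin.lt_def] at hab
        have := b.isLt
        apply Fin.ext
        simp only [Fin.val_one]
        omega
      subst ha0 hb1
      simpa only [Function.comp_apply, hia, hjb] using h2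
    · intro h
      exact ⟨g 0, (e 0).2, g 1, (e 1).2, hlt01, h⟩
  have : (Finset.univ.filter fun ω : Fin t → (Fin n → Fin 3) =>
      ∃ i ∈ S, ∃ j ∈ S, i < j ∧ ω i = ω j)
      = (Finset.univ.filter fun ω : Fin t → (Fin n → Fin 3) =>
        (fun v : Fin 2 → (Fin n → Fin 3) => v 0 = v 1) (ω ∘ g)) := by
    apply Finset.filter_congr
    intro ω _
    simpa using hiff ω
  rw [this]
  have hc := count_comp (W := Fin n → Fin 3) g hginj (fun v => v 0 = v 1)
  have hdiag : (Finset.univ.filter fun v : Fin 2 → (Fin n → Fin 3) => v 0 = v 1).card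
      = 3 ^ n := by
    rw [← Fintype.card_subtype]
    have E : {v : Fin 2 → (Fin n → Fin 3) // v 0 = v 1} ≃ (Fin n → Fin 3) :=
      { toFun := fun v => v.1 0
        invFun := fun w => ⟨fun _ => w, rfl⟩
        left_inv := by
          rintro ⟨v, hv⟩
          apply Subtype.ext
          funext a
          fin_cases a
          · rfl
          · exact hv
        right_inv := fun w => rfl }
    rw [Fintype.card_congr E, Fintype.card_fun, Fintype.card_fin, Fintype.card_fin]
  rw [hdiag] at hc
  have hcw : Fintype.card (Fin n → Fin 3) = 3 ^ n := by
    rw [Fintype.card_fun, Fintype.card_fin, Fintype.card_fin]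
  rw [hcw] at hc
  convert hc using 2

lemma sum_bad {n m t : ℕ} :
    ∑ ω : Fin t → (Fin n → Fin 3),
      (((Finset.univ.powersetCard 3).filter fun S : Finset (Fin t) =>
          ∃ i ∈ S, ∃ j ∈ S, ∃ k ∈ S, i < j ∧ j < k ∧ trifferCount (ω i) (ω j) (ω k) < m).card
        + ((Finset.univ.powersetCard 2).filter fun S : Finset (Fin t) =>
            ∃ i ∈ S, ∃ j ∈ S, i < j ∧ ω i = ω j).card)
      = t.choose 3 * ((Finset.univ.filter fun v : Fin 3 → (Fin n → Fin 3) =>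
            trifferCount (v 0) (v 1) (v 2) < m).card * (3 ^ n) ^ (t - 3))
        + t.choose 2 * (3 ^ n * (3 ^ n) ^ (t - 2)) := by
  classical
  rw [Finset.sum_add_distrib]
  congr 1
  · have h1 : ∀ ω : Fin t → (Fin n → Fin 3),
        ((Finset.univ.powersetCard 3).filter fun S : Finset (Fin t) =>
          ∃ i ∈ S, ∃ j ∈ S, ∃ k ∈ S, i < j ∧ j < k ∧ trifferCount (ω i) (ω j) (ω k) < m).card
        = ∑ S ∈ Finset.univ.powersetCard 3,
            if ∃ i ∈ S, ∃ j ∈ S, ∃ k ∈ S, i < j ∧ j < k ∧ trifferCount (ω i) (ω j) (ω k) < m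
            then 1 else 0 := fun ω => Finset.card_filter _ _
    simp_rw [h1]
    rw [Finset.sum_comm]
    have h2 : ∀ S ∈ Finset.univ.powersetCard 3,
        (∑ ω : Fin t → (Fin n → Fin 3),
          if ∃ i ∈ S, ∃ j ∈ S, ∃ k ∈ S, i < j ∧ j < k ∧ trifferCount (ω i) (ω j) (ω k) < m
          then 1 else 0)
        = (Finset.univ.filter fun v : Fin 3 → (Fin n → Fin 3) =>
            trifferCount (v 0) (v 1) (v 2) < m).card * (3 ^ n) ^ (t - 3) := by
      intro S hS
      rw [← Finset.card_filter]
      exact count_badS S (Finset.mem_powersetCard.1 hS).2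
    rw [Finset.sum_congr rfl h2, Finset.sum_const, Finset.card_powersetCard,
      Finset.card_univ, Fintype.card_fin, smul_eq_mul]
  · have h1 : ∀ ω : Fin t → (Fin n → Fin 3),
        ((Finset.univ.powersetCard 2).filter fun S : Finset (Fin t) =>
          ∃ i ∈ S, ∃ j ∈ S, i < j ∧ ω i = ω j).card
        = ∑ S ∈ Finset.univ.powersetCard 2,
            if ∃ i ∈ S, ∃ j ∈ S, i < j ∧ ω i = ω j then 1 else 0 := fun ω =>
      Finset.card_filter _ _
    simp_rw [h1]
    rw [Finset.sum_comm]
    have h2 : ∀ S ∈ Finset.univ.powersetCard 2,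
        (∑ ω : Fin t → (Fin n → Fin 3),
          if ∃ i ∈ S, ∃ j ∈ S, i < j ∧ ω i = ω j then 1 else 0)
        = 3 ^ n * (3 ^ n) ^ (t - 2) := by
      intro S hS
      rw [← Finset.card_filter]
      exact count_pairS S (Finset.mem_powersetCard.1 hS).2
    rw [Finset.sum_congr rfl h2, Finset.sum_const, Finset.card_powersetCard,
      Finset.card_univ, Fintype.card_fin, smul_eq_mul]

lemma pow_card_filter_eq {n : ℕ} (x : ℝ) (p : Fin n → Prop) [DecidablePred p] :
    x ^ (Finset.univ.filter p).card = ∏ i : Fin n, (if p i then x else 1) := by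
  rw [Finset.prod_ite, Finset.prod_const, Finset.prod_const_one, mul_one]

lemma chernoff_count {n m : ℕ} (x : ℝ) (hx0 : 0 < x) (hx1 : x ≤ 1) :
    ((Finset.univ.filter fun v : Fin 3 → (Fin n → Fin 3) =>
        trifferCount (v 0) (v 1) (v 2) < m).card : ℝ) * x ^ m ≤ (6 * x + 21) ^ n := by
  classical
  set g : (Fin n → (Fin 3 → Fin 3)) → ℕ := fun f =>
    trifferCount (fun i => f i 0) (fun i => f i 1) (fun i => f i 2) with hgdef
  have step1 : ((Finset.univ.filter fun v : Fin 3 → (Fin n → Fin 3) =>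
      trifferCount (v 0) (v 1) (v 2) < m).card : ℝ) * x ^ m
      ≤ ∑ v : Fin 3 → (Fin n → Fin 3), x ^ trifferCount (v 0) (v 1) (v 2) := by
    calc ((Finset.univ.filter fun v : Fin 3 → (Fin n → Fin 3) =>
        trifferCount (v 0) (v 1) (v 2) < m).card : ℝ) * x ^ m
        = ∑ _v ∈ (Finset.univ.filter fun v : Fin 3 → (Fin n → Fin 3) =>
            trifferCount (v 0) (v 1) (v 2) < m), x ^ m := by
          rw [Finset.sum_const, nsmul_eq_mul]
      _ ≤ ∑ v ∈ (Finset.univ.filter fun v : Fin 3 → (Fin n → Fin 3) =>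
            trifferCount (v 0) (v 1) (v 2) < m), x ^ trifferCount (v 0) (v 1) (v 2) := by
          apply Finset.sum_le_sum
          intro v hv
          rw [Finset.mem_filter] at hv
          exact pow_le_pow_of_le_one hx0.le hx1 hv.2.le
      _ ≤ ∑ v : Fin 3 → (Fin n → Fin 3), x ^ trifferCount (v 0) (v 1) (v 2) := by
          apply Finset.sum_le_sum_of_subset_of_nonneg (Finset.filter_subset _ _)
          intro v _ _
          positivity
  refine step1.trans ?_
  have step2 : ∑ v : Fin 3 → (Fin n → Fin 3), x ^ trifferCount (v 0) (v 1) (v 2)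
      = ∑ f : Fin n → (Fin 3 → Fin 3), x ^ g f :=
    Fintype.sum_equiv (Equiv.piComm fun _ _ => Fin 3) _ _ fun v => rfl
  rw [step2]
  have step3 : ∀ f : Fin n → (Fin 3 → Fin 3),
      x ^ g f = ∏ i : Fin n,
        (if ({f i 0, f i 1, f i 2} : Finset (Fin 3)) = Finset.univ then x else 1) := by
    intro f
    rw [hgdef]
    unfold trifferCount
    rw [pow_card_filter_eq]
    apply Finset.prod_congr rfl
    intro i _
    exact if_congr Iff.rfl rfl rfl
  simp_rw [step3]
  rw [← Fintype.prod_sum fun (_ : Fin n) (u : Fin 3 → Fin 3) =>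
      (if ({u 0, u 1, u 2} : Finset (Fin 3)) = Finset.univ then x else (1:ℝ))]
  have step4 : ∀ i : Fin n, ∑ u : Fin 3 → Fin 3,
      (if ({u 0, u 1, u 2} : Finset (Fin 3)) = Finset.univ then x else (1:ℝ))
      = 6 * x + 21 := by
    intro i
    rw [Finset.sum_ite, Finset.sum_const, Finset.sum_const]
    have c1 : (Finset.univ.filter fun u : Fin 3 → Fin 3 =>
        ({u 0, u 1, u 2} : Finset (Fin 3)) = Finset.univ).card = 6 := by decide
    have c2 : (Finset.univ.filter fun u : Fin 3 → Fin 3 =>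
        ¬({u 0, u 1, u 2} : Finset (Fin 3)) = Finset.univ).card = 21 := by decide
    rw [c1, c2]
    push_cast
    ring
  refine le_of_eq ?_
  calc ∏ i : Fin n, ∑ u : Fin 3 → Fin 3,
      (if ({u 0, u 1, u 2} : Finset (Fin 3)) = Finset.univ then x else (1:ℝ))
      = ∏ i : Fin n, (6 * x + 21) := Finset.prod_congr rfl fun i _ => step4 i
    _ = (6 * x + 21) ^ n := by rw [Finset.prod_const, Finset.card_univ, Fintype.card_fin]

end Aux

set_option maxHeartbeats 2000000 in
theorem stmt13 (n m : ℕ) (hm : 1 ≤ m) (hmn : 9 * m < 2 * n) :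
    2 * Real.sqrt 2 / 3 *
        (2 : ℝ) ^ ((n : ℝ) *
          ((m / n : ℝ) * Real.logb 2 ((m / n : ℝ) / (2 / 9)) +
            (1 - (m / n : ℝ)) * Real.logb 2 ((1 - (m / n : ℝ)) / (7 / 9))) / 2) - 1
      ≤ (T n m : ℝ) := by
  classical
  -- basic numeric facts
  have hn5 : 5 ≤ n := by omega
  have hmln : m < n := by omega
  set k : ℕ := n - m with hkdef
  have hk : m + k = n := by omega
  have hk1 : 1 ≤ k := by omega
  set M : ℝ := (m : ℝ) with hM
  set K : ℝ := (k : ℝ) with hK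
  set N : ℝ := (n : ℝ) with hN
  have hM0 : 0 < M := by rw [hM]; exact_mod_cast hm
  have hK0 : 0 < K := by rw [hK]; exact_mod_cast hk1
  have hN0 : 0 < N := by positivity
  have hNMK : N = M + K := by
    rw [hM, hK, hN]
    exact_mod_cast hk.symm
  have h9m2n : 9 * M ≤ 2 * N := by
    have : (9 * m : ℝ) ≤ 2 * n := by exact_mod_cast hmn.le
    simpa [hM, hN] using this
  -- the key quantity P = 2 ^ (n h)
  set P : ℝ := (9 * M / (2 * N)) ^ m * (9 * K / (7 * N)) ^ k with hPdef
  have hP0 : 0 < P := by positivity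
  -- the tilt parameter
  set x : ℝ := 7 * M / (2 * K) with hxdef
  have hx0 : 0 < x := by positivity
  have hx1 : x ≤ 1 := by
    rw [hxdef, div_le_one (by positivity)]
    have : K = N - M := by rw [hNMK]; ring
    rw [this]
    linarith
  -- the Chernoff identity
  have hI1 : (6 * x + 21) ^ n * P = 27 ^ n * x ^ m := by
    have h6x : 6 * x + 21 = 21 * N / K := by
      rw [hxdef, hNMK]
      field_simp
      ring
    rw [h6x, hPdef, hxdef, ← hk, pow_add, pow_add]
    have e1 : (21 * N / K) ^ m * (9 * M / (2 * N)) ^ m = (27 : ℝ) ^ m * (7 * M / (2 * K)) ^ m := by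
      rw [← mul_pow, ← mul_pow]
      congr 1
      field_simp
      ring
    have e2 : (21 * N / K) ^ k * (9 * K / (7 * N)) ^ k = (27 : ℝ) ^ k := by
      rw [← mul_pow]
      have : 21 * N / K * (9 * K / (7 * N)) = 27 := by
        field_simp
        ring
      rw [this]
    calc (21 * N / K) ^ m * (21 * N / K) ^ k * ((9 * M / (2 * N)) ^ m * (9 * K / (7 * N)) ^ k)
        = ((21 * N / K) ^ m * (9 * M / (2 * N)) ^ m)
            * ((21 * N / K) ^ k * (9 * K / (7 * N)) ^ k) := by ring
      _ = (27 : ℝ) ^ m * (7 * M / (2 * K)) ^ m * (27 : ℝ) ^ k := by rw [e1, e2]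
      _ = (27 : ℝ) ^ m * (27 : ℝ) ^ k * (7 * M / (2 * K)) ^ m := by ring
  -- the entropy exponent equals logb 2 P
  have hE : (n : ℝ) *
      ((m / n : ℝ) * Real.logb 2 ((m / n : ℝ) / (2 / 9)) +
        (1 - (m / n : ℝ)) * Real.logb 2 ((1 - (m / n : ℝ)) / (7 / 9)))
      = Real.logb 2 P := by
    have h1 : 1 - (m / n : ℝ) = K / N := by
      rw [← hM, ← hN, hNMK]
      field_simp
      ring
    have h2 : ((m / n : ℝ)) / (2 / 9) = 9 * M / (2 * N) := by
      rw [← hM, ← hN]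
      field_simp
    have h3 : (K / N) / (7 / 9) = 9 * K / (7 * N) := by
      field_simp
    rw [h1, h2, h3, hPdef, Real.logb_mul (by positivity) (by positivity),
      Real.logb_pow, Real.logb_pow]
    rw [← hM, ← hN]
    field_simp
    rw [← hK]; ring
  -- hence the target power of two is √P
  have hpow : (2 : ℝ) ^ ((n : ℝ) *
      ((m / n : ℝ) * Real.logb 2 ((m / n : ℝ) / (2 / 9)) +
        (1 - (m / n : ℝ)) * Real.logb 2 ((1 - (m / n : ℝ)) / (7 / 9))) / 2)
      = Real.sqrt P := by
    rw [hE]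
    have : Real.logb 2 P / 2 = Real.logb 2 P * (1 / 2) := by ring
    rw [this, Real.rpow_mul (by norm_num : (0:ℝ) ≤ 2),
      Real.rpow_logb (by norm_num) (by norm_num) hP0, Real.sqrt_eq_rpow]
  -- the AM-GM bound P ≤ (9/7)^n
  have hPle : P ≤ (9 / 7 : ℝ) ^ n := by
    have key : P * (7 / 9 : ℝ) ^ n ≤ 1 := by
      set a : ℝ := 7 * M / (2 * N) with hadef
      set b : ℝ := K / N with hbdef
      have ha0 : 0 ≤ a := by positivity
      have hb0 : 0 ≤ b := by positivity
      have heq : P * (7 / 9 : ℝ) ^ n = a ^ m * b ^ k := by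
        rw [hPdef, ← hk, pow_add]
        have e1 : (9 * M / (2 * N)) * (7 / 9) = a := by rw [hadef]; field_simp
        have e2 : (9 * K / (7 * N)) * (7 / 9) = b := by rw [hbdef]; field_simp
        calc (9 * M / (2 * N)) ^ m * (9 * K / (7 * N)) ^ k * ((7 / 9 : ℝ) ^ m * (7 / 9 : ℝ) ^ k)
            = ((9 * M / (2 * N)) * (7 / 9)) ^ m * ((9 * K / (7 * N)) * (7 / 9)) ^ k := by
              rw [mul_pow, mul_pow]; ring
          _ = a ^ m * b ^ k := by rw [e1, e2]
      rw [heq]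
      -- weighted AM-GM
      have hw1 : (0:ℝ) ≤ M / N := by positivity
      have hw2 : (0:ℝ) ≤ K / N := by positivity
      have hwsum : M / N + K / N = 1 := by
        rw [← add_div, hNMK]
        field_simp
      have hgm := Real.geom_mean_le_arith_mean2_weighted hw1 hw2 ha0 hb0 hwsum
      have hMK : 7 * M ≤ 2 * K := by
        rw [hNMK] at h9m2n
        linarith
      have ham : M / N * a + K / N * b ≤ 1 := by
        have hexp : M / N * a + K / N * b = (7 * M ^ 2 / 2 + K ^ 2) / N ^ 2 := by
          rw [hadef, hbdef]
          field_simp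
        rw [hexp, div_le_one (by positivity), hNMK]
        nlinarith [mul_le_mul_of_nonneg_left hMK hM0.le, hM0, hK0]
      have hL : a ^ (M / N) * b ^ (K / N) ≤ 1 := hgm.trans ham
      have hL0 : 0 ≤ a ^ (M / N) * b ^ (K / N) := by positivity
      have hw1N : M / N * N = M := by field_simp
      have hw2N : K / N * N = K := by field_simp
      have hpowN : (a ^ (M / N) * b ^ (K / N)) ^ (N : ℝ) = a ^ m * b ^ k := by
        rw [Real.mul_rpow (Real.rpow_nonneg ha0 _) (Real.rpow_nonneg hb0 _),
          ← Real.rpow_mul ha0, ← Real.rpow_mul hb0, hw1N, hw2N, hM, hK,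
          Real.rpow_natCast, Real.rpow_natCast]
      calc a ^ m * b ^ k = (a ^ (M / N) * b ^ (K / N)) ^ (N : ℝ) := hpowN.symm
        _ ≤ 1 := Real.rpow_le_one hL0 hL hN0.le
    have h79 : (0:ℝ) < (7 / 9 : ℝ) ^ n := by positivity
    have hprod : ((7:ℝ) / 9) ^ n * ((9:ℝ) / 7) ^ n = 1 := by
      rw [← mul_pow]
      norm_num
    calc P = P * ((7 / 9 : ℝ) ^ n * ((9 / 7 : ℝ) ^ n)) := by rw [hprod, mul_one]
      _ = (P * (7 / 9 : ℝ) ^ n) * (9 / 7 : ℝ) ^ n := by ring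
      _ ≤ 1 * (9 / 7 : ℝ) ^ n := by
          apply mul_le_mul_of_nonneg_right key (by positivity)
      _ = (9 / 7 : ℝ) ^ n := by rw [one_mul]
  -- Chernoff consequence
  set Nb : ℕ := (Finset.univ.filter fun v : Fin 3 → (Fin n → Fin 3) =>
      trifferCount (v 0) (v 1) (v 2) < m).card with hNbdef
  have hNbP : (Nb : ℝ) * P ≤ 27 ^ n := by
    have h1 : (Nb : ℝ) * x ^ m ≤ (6 * x + 21) ^ n := chernoff_count x hx0 hx1
    have h2 : (Nb : ℝ) * P * x ^ m ≤ 27 ^ n * x ^ m := by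
      calc (Nb : ℝ) * P * x ^ m = ((Nb : ℝ) * x ^ m) * P := by ring
        _ ≤ (6 * x + 21) ^ n * P := mul_le_mul_of_nonneg_right h1 hP0.le
        _ = 27 ^ n * x ^ m := hI1
    exact le_of_mul_le_mul_right h2 (pow_pos hx0 m)
  -- choose the number of sampled words
  obtain ⟨t, htdef⟩ : ∃ t : ℕ, t = Nat.floor (Real.sqrt (2 * P)) := ⟨_, rfl⟩
  have htle : (t : ℝ) ≤ Real.sqrt (2 * P) := htdef ▸ Nat.floor_le (Real.sqrt_nonneg _)
  have ht2 : (t : ℝ) ^ 2 ≤ 2 * P := by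
    nlinarith [Real.sq_sqrt (by positivity : (0:ℝ) ≤ 2 * P), Real.sqrt_nonneg (2 * P),
      Nat.cast_nonneg (α := ℝ) t]
  have htlt : Real.sqrt (2 * P) < (t : ℝ) + 1 := htdef ▸ Nat.lt_floor_add_one _
  set p : ℝ := (3 : ℝ) ^ n with hpdef
  have hp0 : 0 < p := by positivity
  have h27 : p ^ 3 = 27 ^ n := by
    rw [hpdef, ← pow_mul, mul_comm, pow_mul]
    norm_num
  -- the two expectation bounds
  have hb3 : (t.choose 3 : ℝ) * ((Nb : ℝ) * p ^ (t - 3)) ≤ (t : ℝ) / 3 * p ^ t := by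
    rcases Nat.lt_or_ge t 3 with h3 | h3
    · rw [Nat.choose_eq_zero_of_lt h3]
      push_cast
      rw [zero_mul]
      positivity
    · have hsplit : p ^ (t - 3) * p ^ 3 = p ^ t := by
        rw [← pow_add, Nat.sub_add_cancel h3]
      have hC3 : (t.choose 3 : ℝ) * 6 ≤ (t : ℝ) ^ 3 := by
        have hd := Nat.descFactorial_le_pow t 3
        rw [Nat.descFactorial_eq_factorial_mul_choose] at hd
        have h6 : Nat.factorial 3 = 6 := rfl
        rw [h6, mul_comm] at hd
        exact_mod_cast hd
      have hq0 : (0:ℝ) ≤ p ^ (t - 3) := by positivity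
      have hgoal6 : 6 * P * ((t.choose 3 : ℝ) * ((Nb : ℝ) * p ^ (t - 3)))
          ≤ 6 * P * ((t : ℝ) / 3 * p ^ t) := by
        calc 6 * P * ((t.choose 3 : ℝ) * ((Nb : ℝ) * p ^ (t - 3)))
            = ((t.choose 3 : ℝ) * 6) * (((Nb : ℝ) * P) * p ^ (t - 3)) := by ring
          _ ≤ (t : ℝ) ^ 3 * (((Nb : ℝ) * P) * p ^ (t - 3)) := by
              apply mul_le_mul_of_nonneg_right hC3
              positivity
          _ ≤ (t : ℝ) ^ 3 * (27 ^ n * p ^ (t - 3)) := by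
              apply mul_le_mul_of_nonneg_left
                (mul_le_mul_of_nonneg_right hNbP hq0) (by positivity)
          _ = (t : ℝ) ^ 3 * p ^ t := by rw [← h27, mul_comm (p ^ 3), hsplit]
          _ ≤ (t : ℝ) * (2 * P) * p ^ t := by
              apply mul_le_mul_of_nonneg_right ?_ (by positivity)
              nlinarith [ht2, Nat.cast_nonneg (α := ℝ) t]
          _ = 6 * P * ((t : ℝ) / 3 * p ^ t) := by ring
      exact le_of_mul_le_mul_left hgoal6 (by positivity)
  have hP3p : 3 * P ≤ p := by
    have h73 : (3:ℝ) ≤ ((7:ℝ)/3) ^ n := by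
      calc (3:ℝ) ≤ ((7:ℝ)/3) ^ 2 := by norm_num
        _ ≤ ((7:ℝ)/3) ^ n := by
            exact pow_le_pow_right₀ (by norm_num) (Nat.le_trans (by norm_num) hn5)
    have hmul : ((9:ℝ)/7) ^ n * ((7:ℝ)/3) ^ n = p := by
      rw [hpdef, ← mul_pow]
      norm_num
    calc 3 * P ≤ 3 * ((9:ℝ)/7) ^ n := by linarith [hPle]
      _ ≤ ((7:ℝ)/3) ^ n * ((9:ℝ)/7) ^ n := by
          apply mul_le_mul_of_nonneg_right h73 (by positivity)
      _ = p := by rw [mul_comm, hmul]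
  have hb2 : (t.choose 2 : ℝ) * (p * p ^ (t - 2)) ≤ 1 / 3 * p ^ t := by
    rcases Nat.lt_or_ge t 2 with h2 | h2
    · rw [Nat.choose_eq_zero_of_lt h2]
      push_cast
      rw [zero_mul]
      positivity
    · have hsplit : p ^ 2 * p ^ (t - 2) = p ^ t := by
        rw [← pow_add, Nat.add_sub_cancel' h2]
      have hC2 : (t.choose 2 : ℝ) * 2 ≤ (t : ℝ) ^ 2 := by
        have hd := Nat.descFactorial_le_pow t 2
        rw [Nat.descFactorial_eq_factorial_mul_choose] at hd
        have h2' : Nat.factorial 2 = 2 := rfl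
        rw [h2', mul_comm] at hd
        exact_mod_cast hd
      have h6 : 6 * ((t.choose 2 : ℝ) * (p * p ^ (t - 2))) ≤ 6 * (1 / 3 * p ^ t) := by
        calc 6 * ((t.choose 2 : ℝ) * (p * p ^ (t - 2)))
            = ((t.choose 2 : ℝ) * 2) * (3 * (p * p ^ (t - 2))) := by ring
          _ ≤ (t : ℝ) ^ 2 * (3 * (p * p ^ (t - 2))) := by
              apply mul_le_mul_of_nonneg_right hC2 (by positivity)
          _ ≤ (2 * P) * (3 * (p * p ^ (t - 2))) := by
              apply mul_le_mul_of_nonneg_right ht2 (by positivity)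
          _ = (3 * P) * (2 * (p * p ^ (t - 2))) := by ring
          _ ≤ p * (2 * (p * p ^ (t - 2))) := by
              apply mul_le_mul_of_nonneg_right hP3p (by positivity)
          _ = 2 * (p ^ 2 * p ^ (t - 2)) := by ring
          _ = 2 * p ^ t := by rw [hsplit]
          _ = 6 * (1 / 3 * p ^ t) := by ring
      exact le_of_mul_le_mul_left h6 (by norm_num)
  -- averaging over all tuples
  set R : ℝ := (t : ℝ) / 3 + 1 / 3 with hRdef
  have hcardΩ : (Finset.univ : Finset (Fin t → (Fin n → Fin 3))).card = (3 ^ n) ^ t := by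
    rw [Finset.card_univ, Fintype.card_fun, Fintype.card_fun, Fintype.card_fin,
      Fintype.card_fin, Fintype.card_fin]
  have hsum := sum_bad (n := n) (m := m) (t := t)
  have hle : ∑ ω : Fin t → (Fin n → Fin 3),
      ((((Finset.univ.powersetCard 3).filter fun S : Finset (Fin t) =>
          ∃ i ∈ S, ∃ j ∈ S, ∃ k ∈ S, i < j ∧ j < k ∧ trifferCount (ω i) (ω j) (ω k) < m).card
        + ((Finset.univ.powersetCard 2).filter fun S : Finset (Fin t) =>
            ∃ i ∈ S, ∃ j ∈ S, i < j ∧ ω i = ω j).card : ℕ) : ℝ)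
      ≤ ∑ _ω : Fin t → (Fin n → Fin 3), R := by
    rw [← Nat.cast_sum, hsum, Finset.sum_const, hcardΩ, nsmul_eq_mul]
    push_cast
    have hpt : ((3:ℝ) ^ n) ^ t = p ^ t := by rw [hpdef]
    calc (t.choose 3 : ℝ) * ((Nb : ℝ) * ((3:ℝ) ^ n) ^ (t - 3))
          + (t.choose 2 : ℝ) * ((3:ℝ) ^ n * ((3:ℝ) ^ n) ^ (t - 2))
        = (t.choose 3 : ℝ) * ((Nb : ℝ) * p ^ (t - 3))
          + (t.choose 2 : ℝ) * (p * p ^ (t - 2)) := by rw [hpdef]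
      _ ≤ (t : ℝ) / 3 * p ^ t + 1 / 3 * p ^ t := add_le_add hb3 hb2
      _ = p ^ t * R := by rw [hRdef]; ring
      _ = ((3:ℝ) ^ n) ^ t * R := by rw [hpt]
  obtain ⟨ω, -, hω⟩ := Finset.exists_le_of_sum_le Finset.univ_nonempty hle
  -- alteration
  obtain ⟨C, hCtrif, hCcard⟩ := alteration (n := n) (m := m) ω
  -- T is at least the size of this code
  have hTge : C.card ≤ T n m := by
    unfold T
    apply le_csSup
    · refine ⟨Fintype.card (Fin n → Fin 3), ?_⟩
      rintro y ⟨C', -, rfl⟩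
      exact (Finset.card_le_univ C').trans_eq Finset.card_univ
    · exact ⟨C, hCtrif, rfl⟩
  -- final assembly
  rw [hpow]
  have hsq : Real.sqrt (2 * P) = Real.sqrt 2 * Real.sqrt P := Real.sqrt_mul (by norm_num) P
  have hCge : (2 * (t : ℝ) - 1) / 3 ≤ (C.card : ℝ) := by
    rw [Nat.add_assoc] at hCcard
    have hcast := (Nat.cast_le (α := ℝ)).2 hCcard
    rw [Nat.cast_add] at hcast
    rw [hRdef] at hω
    linarith [hω, hcast]
  have hT : (C.card : ℝ) ≤ (T n m : ℝ) := by exact_mod_cast hTge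
  calc 2 * Real.sqrt 2 / 3 * Real.sqrt P - 1
      = 2 / 3 * Real.sqrt (2 * P) - 1 := by rw [hsq]; ring
    _ ≤ 2 / 3 * ((t : ℝ) + 1) - 1 := by
        have := htlt
        nlinarith
    _ = (2 * (t : ℝ) - 1) / 3 := by ring
    _ ≤ (C.card : ℝ) := hCge
    _ ≤ (T n m : ℝ) := hT
end
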